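/- arXiv:0902.0623 — 10 statements merged into one kernel-verified Lean document; each statement's English description precedes it below -/
import Mathlib

section
/- For every implication sublattice A of B, the set Ā := A ∪ {xᶜ : x ∈ A} is a Boolean subalgebra of B, i.e., Ā contains 0 and 1 and is closed under join, meet and complement. -/
open scoped Classical

noncomputable section

/-- An implication sublattice of a Boolean algebra `B`: a nonempty subset closed under
the implication `x → y := xᶜ ⊔ y` and under meet. -/
def IsImplSublattice {B : Type*} [BooleanAlgebra B] (A : Set B) : Prop :=
  A.Nonempty ∧ (∀ x ∈ A, ∀ y ∈ A, xᶜ ⊔ y ∈ A) ∧ (∀ x ∈ A, ∀ y ∈ A, x ⊓ y ∈ A)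

/-- A Boolean subalgebra of `B`: a subset containing `⊥` and `⊤`, closed under
join, meet and complement. -/
def IsBoolSubalgebra {B : Type*} [BooleanAlgebra B] (C : Set B) : Prop :=
  (⊥ : B) ∈ C ∧ (⊤ : B) ∈ C ∧ (∀ x ∈ C, ∀ y ∈ C, x ⊔ y ∈ C) ∧
    (∀ x ∈ C, ∀ y ∈ C, x ⊓ y ∈ C) ∧ (∀ x ∈ C, xᶜ ∈ C)

/-- Lemma `lem:Bool`. For every implication sublattice `A` of `B`,
the set `Ā := A ∪ {xᶜ : x ∈ A}` is a Boolean subalgebra of `B`. -/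
theorem closure_isBoolSubalgebra {B : Type*} [Fintype B] [BooleanAlgebra B] [Nontrivial B]
    (A : Set B) (hA : IsImplSublattice A) :
    IsBoolSubalgebra (A ∪ compl '' A) := by
  obtain ⟨⟨a, ha⟩, hImp, hInf⟩ := hA
  have htop : (⊤ : B) ∈ A := by
    have := hImp a ha a ha
    simpa using this
  have hjoinA : ∀ x ∈ A, ∀ y ∈ A, x ⊔ y ∈ A := by
    intro x hx y hy
    have h := hImp (xᶜ ⊔ y) (hImp x hx y hy) y hy
    have : (xᶜ ⊔ y)ᶜ ⊔ y = x ⊔ y := by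
      rw [compl_sup, compl_compl, sup_inf_right]
      simp
    rwa [this] at h
  refine ⟨?_, Or.inl htop, ?_, ?_, ?_⟩
  · exact Or.inr ⟨⊤, htop, by simp⟩
  · rintro x (hx | ⟨x', hx', rfl⟩) y (hy | ⟨y', hy', rfl⟩)
    · exact Or.inl (hjoinA x hx y hy)
    · exact Or.inl (by simpa [sup_comm] using hImp y' hy' x hx)
    · exact Or.inl (hImp x' hx' y hy)
    · exact Or.inr ⟨x' ⊓ y', hInf x' hx' y' hy', by simp⟩
  · rintro x (hx | ⟨x', hx', rfl⟩) y (hy | ⟨y', hy', rfl⟩)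
    · exact Or.inl (hInf x hx y hy)
    · refine Or.inr ⟨xᶜ ⊔ y', hImp x hx y' hy', ?_⟩
      simp
    · refine Or.inr ⟨yᶜ ⊔ x', hImp y hy x' hx', ?_⟩
      simp [inf_comm]
    · exact Or.inr ⟨x' ⊔ y', hjoinA x' hx' y' hy', by simp⟩
  · rintro x (hx | ⟨x', hx', rfl⟩)
    · exact Or.inr ⟨x, hx, rfl⟩
    · exact Or.inl (by simpa using hx')
end
end

section
/- The map A ↦ Ā := A ∪ {xᶜ : x ∈ A} is a closure operator on the lattice 𝒜 of implication sublattices of B: for every A ∈ 𝒜 one has Ā ∈ 𝒜, A ⊆ Ā, the map is monotone with respect to inclusion, and Ā̄ = Ā. -/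
open scoped Classical

noncomputable section

/-- Lemma `lem:closure`. The map `A ↦ Ā := A ∪ {xᶜ : x ∈ A}` is a
closure operator on the lattice `𝒜` of implication sublattices of `B`: it maps `𝒜` to
`𝒜`, is extensive, monotone, and idempotent. -/
theorem closure_is_closure_operator {B : Type*} [Fintype B] [BooleanAlgebra B] [Nontrivial B] :
    (∀ A : Set B, IsImplSublattice A → IsImplSublattice (A ∪ compl '' A)) ∧
    (∀ A : Set B, IsImplSublattice A → A ⊆ A ∪ compl '' A) ∧
    (∀ A₁ A₂ : Set B, IsImplSublattice A₁ → IsImplSublattice A₂ → A₁ ⊆ A₂ →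
      A₁ ∪ compl '' A₁ ⊆ A₂ ∪ compl '' A₂) ∧
    (∀ A : Set B, IsImplSublattice A →
      (A ∪ compl '' A) ∪ compl '' (A ∪ compl '' A) = A ∪ compl '' A) := by
  have sup_mem : ∀ A : Set B, IsImplSublattice A → ∀ x ∈ A, ∀ y ∈ A, x ⊔ y ∈ A := by
    intro A hA x hx y hy
    have h1 : xᶜ ⊔ y ∈ A := hA.2.1 x hx y hy
    have h2 := hA.2.1 _ h1 y hy
    have : (xᶜ ⊔ y)ᶜ ⊔ y = x ⊔ y := by
      rw [compl_sup, compl_compl, sup_inf_right, compl_sup_eq_top, inf_top_eq]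
    rwa [this] at h2
  refine ⟨?_, ?_, ?_, ?_⟩
  · intro A hA
    refine ⟨hA.1.mono Set.subset_union_left, ?_, ?_⟩
    · rintro x (hx | ⟨a, ha, rfl⟩) y (hy | ⟨b, hb, rfl⟩)
      · exact Or.inl (hA.2.1 x hx y hy)
      · refine Or.inr ⟨x ⊓ b, hA.2.2 x hx b hb, ?_⟩
        simp [compl_inf]
      · refine Or.inl ?_
        rw [compl_compl]
        exact sup_mem A hA a ha y hy
      · refine Or.inl ?_
        rw [compl_compl, sup_comm]
        exact hA.2.1 b hb a ha
    · rintro x (hx | ⟨a, ha, rfl⟩) y (hy | ⟨b, hb, rfl⟩)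
      · exact Or.inl (hA.2.2 x hx y hy)
      · refine Or.inr ⟨xᶜ ⊔ b, hA.2.1 x hx b hb, ?_⟩
        rw [compl_sup, compl_compl]
      · refine Or.inr ⟨yᶜ ⊔ a, hA.2.1 y hy a ha, ?_⟩
        rw [compl_sup, compl_compl, inf_comm]
      · refine Or.inr ⟨a ⊔ b, sup_mem A hA a ha b hb, ?_⟩
        rw [compl_sup]
  · intro A _
    exact Set.subset_union_left
  · intro A₁ A₂ _ _ h
    exact Set.union_subset_union h (Set.image_mono h)
  · intro A _
    have : compl '' (A ∪ compl '' A) = compl '' A ∪ A := by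
      rw [Set.image_union, Set.image_image]
      simp [Set.image_id']
    rw [this]
    rw [Set.union_comm (compl '' A) A, Set.union_self]
end
end

section
/- Closure theorem for Möbius functions: Let X be a finite partial order and cl : X → X a closure operator on X (extensive, monotone and idempotent). Let X̄ = {x ∈ X : cl x = x} be the subposet of closed elements, with Möbius functions μ on X and μ̄ on X̄. Then for all y, z ∈ X: the sum of μ(y, x) over all x ∈ X with cl x = cl z equals μ̄(y, cl z) if y is closed (cl y = y), and equals 0 otherwise. -/
open scoped Classical

noncomputable section

/-- Any finite preorder is locally finite. -/
instance (priority := 100) fintypeLocallyFinite {X : Type*} [Fintype X] [Preorder X] :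
    LocallyFiniteOrder X :=
  Fintype.toLocallyFiniteOrder

open Finset

/-- The "lower set" finset of a finite order. -/
def lowSet {α : Type*} [Fintype α] [PartialOrder α] (v : α) : Finset α :=
  Finset.univ.filter fun x => x ≤ v

lemma mem_lowSet {α : Type*} [Fintype α] [PartialOrder α] {x v : α} :
    x ∈ lowSet v ↔ x ≤ v := by simp [lowSet]

/-- In a finite partial order, two functions with the same sums over lower sets agree. -/
lemma sum_lowSet_cancel {α : Type*} [Fintype α] [PartialOrder α] (f g : α → ℤ)
    (h : ∀ v, ∑ w ∈ lowSet v, f w = ∑ w ∈ lowSet v, g w) : ∀ v, f v = g v := by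
  intro v
  induction v using WellFoundedLT.induction with
  | ind v ih =>
    have hins : lowSet v = insert v (Finset.univ.filter fun x => x < v) := by
      ext x
      simp only [mem_lowSet, Finset.mem_insert, Finset.mem_filter, Finset.mem_univ, true_and]
      constructor
      · intro hx; rcases eq_or_lt_of_le hx with h' | h'
        · exact Or.inl h'
        · exact Or.inr h'
      · rintro (rfl | h'); · exact le_refl _
        · exact le_of_lt h'
    have hnm : v ∉ Finset.univ.filter fun x => x < v := by simp
    have hv := h v
    rw [hins, Finset.sum_insert hnm, Finset.sum_insert hnm] at hv
    have : ∑ w ∈ Finset.univ.filter (fun x => x < v), f w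
        = ∑ w ∈ Finset.univ.filter (fun x => x < v), g w :=
      Finset.sum_congr rfl fun w hw => ih w (by simpa using hw)
    omega

/-- Sum of the Möbius function over a lower set. -/
lemma sum_lowSet_mu {α : Type*} [Fintype α] [PartialOrder α] [LocallyFiniteOrder α]
    [DecidableEq α] (y v : α) :
    ∑ x ∈ lowSet v, IncidenceAlgebra.mu ℤ y x = if y = v then 1 else 0 := by
  by_cases hyv : y ≤ v
  · rw [← IncidenceAlgebra.sum_Icc_mu_right (𝕜 := ℤ) y v]
    refine (Finset.sum_subset ?_ ?_).symm
    · intro x hx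
      exact mem_lowSet.mpr (Finset.mem_Icc.mp hx).2
    · intro x hx hx'
      refine IncidenceAlgebra.apply_eq_zero_of_not_le ?_ _
      intro hyx
      exact hx' (Finset.mem_Icc.mpr ⟨hyx, mem_lowSet.mp hx⟩)
  · rw [if_neg (fun h => hyv (le_of_eq h))]
    apply Finset.sum_eq_zero
    intro x hx
    refine IncidenceAlgebra.apply_eq_zero_of_not_le ?_ _
    intro hyx
    exact hyv (hyx.trans (mem_lowSet.mp hx))

/-- Theorem `thm:closure`, closure theorem for Möbius functions.
Let `X` be a finite partial order and `cl` a closure operator on `X` (extensive,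
monotone, idempotent).  Let `X̄ = {x : cl x = x}` be the subposet of closed elements.
Then for all `y z : X`, the sum of `μ(y, x)` over all `x` with `cl x = cl z` equals
`μ̄(y, cl z)` if `y` is closed, and `0` otherwise. -/
theorem moebius_closure_theorem {X : Type*} [Fintype X] [PartialOrder X]
    (cl : X → X) (hext : ∀ x, x ≤ cl x) (hmono : ∀ x y, x ≤ y → cl x ≤ cl y)
    (hidem : ∀ x, cl (cl x) = cl x) (y z : X) :
    (∑ x ∈ Finset.univ.filter fun x => cl x = cl z, IncidenceAlgebra.mu ℤ y x) =
      if hy : cl y = y then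
        IncidenceAlgebra.mu (α := {x : X // cl x = x}) ℤ ⟨y, hy⟩ ⟨cl z, hidem z⟩
      else 0 := by
  set Xb := {x : X // cl x = x}
  set clb : X → Xb := fun x => ⟨cl x, hidem x⟩ with hclb
  set S : Xb → ℤ := fun w =>
    ∑ x ∈ Finset.univ.filter fun x => cl x = (w : X), IncidenceAlgebra.mu ℤ y x with hS
  -- key summation identity for S
  have hsum : ∀ v : Xb, ∑ w ∈ lowSet v, S w = if y = (v : X) then 1 else 0 := by
    intro v
    have hmap : ∀ x ∈ lowSet (v : X), clb x ∈ lowSet v := by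
      intro x hx
      refine mem_lowSet.mpr ?_
      show cl x ≤ (v : X)
      calc cl x ≤ cl (v : X) := hmono _ _ (mem_lowSet.mp hx)
        _ = (v : X) := v.2
    have hfib : ∀ w ∈ lowSet v,
        (Finset.univ.filter fun x => cl x = (w : X)) =
          (lowSet (v : X)).filter fun x => clb x = w := by
      intro w hw
      ext x
      simp only [Finset.mem_filter, Finset.mem_univ, true_and, lowSet]
      constructor
      · intro hx
        refine ⟨?_, ?_⟩
        · calc x ≤ cl x := hext x
            _ = (w : X) := hx
            _ ≤ (v : X) := by
                have := mem_lowSet.mp hw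
                exact_mod_cast this
        · exact Subtype.ext hx
      · intro hx
        exact congrArg Subtype.val hx.2
    calc ∑ w ∈ lowSet v, S w
        = ∑ w ∈ lowSet v, ∑ x ∈ (lowSet (v : X)).filter
            (fun x => clb x = w), IncidenceAlgebra.mu ℤ y x :=
          Finset.sum_congr rfl fun w hw => by rw [← hfib w hw]
      _ = ∑ x ∈ lowSet (v : X), IncidenceAlgebra.mu ℤ y x :=
          Finset.sum_fiberwise_of_maps_to hmap _
      _ = if y = (v : X) then 1 else 0 := sum_lowSet_mu y (v : X)
  by_cases hy : cl y = y
  · rw [dif_pos hy]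
    have key : ∀ v : Xb, S v = IncidenceAlgebra.mu ℤ (⟨y, hy⟩ : Xb) v := by
      apply sum_lowSet_cancel
      intro v
      rw [hsum v]
      refine Eq.trans ?_ (sum_lowSet_mu (⟨y, hy⟩ : Xb) v).symm
      congr 1
      simp [Subtype.ext_iff]
    exact key ⟨cl z, hidem z⟩
  · rw [dif_neg hy]
    have key : ∀ v : Xb, S v = 0 := by
      have := sum_lowSet_cancel S (fun _ => 0) (fun v => by
        rw [hsum v, Finset.sum_const_zero, if_neg]
        intro h
        exact hy (h ▸ v.2))
      simpa using this
    exact key ⟨cl z, hidem z⟩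
end
end

section
/- For an implication sublattice C of B, defining C̄ := C ∪ {xᶜ : x ∈ C}, one has C̄ = B if and only if C = B or C is an ultrafilter of B, i.e., C is an upward-closed, meet-closed subset not containing 0 such that for every x ∈ B exactly one of x, xᶜ belongs to C. -/
open scoped Classical

noncomputable section

/-- Lemma `lem:closEqB`. For an implication sublattice `C` of `B`,
`C̄ = B` iff `C = B` or `C` is an ultrafilter of `B`: an upward-closed, meet-closed
subset not containing `⊥` such that for every `x` exactly one of `x`, `xᶜ` lies in `C`. -/
theorem closure_eq_univ_iff {B : Type*} [Fintype B] [BooleanAlgebra B] [Nontrivial B]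
    (C : Set B) (hC : IsImplSublattice C) :
    C ∪ compl '' C = Set.univ ↔
      C = Set.univ ∨
        ((∀ x ∈ C, ∀ y : B, x ≤ y → y ∈ C) ∧ (∀ x ∈ C, ∀ y ∈ C, x ⊓ y ∈ C) ∧
          (⊥ : B) ∉ C ∧ ∀ x : B, Xor' (x ∈ C) (xᶜ ∈ C)) := by
  obtain ⟨⟨a, ha⟩, himp, hmeet⟩ := hC
  constructor
  · intro h
    by_cases hCu : C = Set.univ
    · exact Or.inl hCu
    right
    have hup : ∀ x ∈ C, ∀ y : B, x ≤ y → y ∈ C := by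
      intro x hx y hxy
      have hy : y ∈ C ∪ compl '' C := h ▸ Set.mem_univ y
      rcases hy with hy | ⟨z, hz, rfl⟩
      · exact hy
      · have := himp z hz x hx
        rwa [sup_eq_left.mpr hxy] at this
    have hbot : (⊥ : B) ∉ C := by
      intro hb
      apply hCu
      ext x
      simp only [Set.mem_univ, iff_true]
      exact hup ⊥ hb x bot_le
    refine ⟨hup, hmeet, hbot, ?_⟩
    intro x
    have hx : x ∈ C ∪ compl '' C := h ▸ Set.mem_univ x
    have hnotboth : ¬(x ∈ C ∧ xᶜ ∈ C) := by
      rintro ⟨h1, h2⟩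
      have := hmeet x h1 xᶜ h2
      rw [inf_compl_eq_bot] at this
      exact hbot this
    rcases hx with hx | ⟨z, hz, rfl⟩
    · exact Or.inl ⟨hx, fun hc => hnotboth ⟨hx, hc⟩⟩
    · exact Or.inr ⟨by rwa [compl_compl], fun hc => hnotboth ⟨hc, by rwa [compl_compl]⟩⟩
  · rintro (rfl | ⟨hup, hm, hbot, hxor⟩)
    · simp
    · ext x
      simp only [Set.mem_univ, iff_true, Set.mem_union, Set.mem_image]
      rcases hxor x with ⟨hx, _⟩ | ⟨hx, _⟩
      · exact Or.inl hx
      · exact Or.inr ⟨xᶜ, hx, compl_compl x⟩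
end
end

section
/- Let A be an implication sublattice of B with least element a := min A, and let c₁, c₂ be atoms of B with c₁ ≤ a and c₂ ≤ a. Then the intervals [A, [c₁,1]] and [A, [c₂,1]] in the lattice 𝒜 are order-isomorphic. -/
open scoped Classical

noncomputable section

/-- The lattice `𝒜` of implication sublattices of `B`, ordered by inclusion. -/
abbrev ImplLat (B : Type*) [BooleanAlgebra B] : Type _ := {A : Set B // IsImplSublattice A}

section Aux
variable {B : Type*} [BooleanAlgebra B]

lemma atom_le_compl_iff {t x : B} (ht : IsAtom t) : t ≤ xᶜ ↔ ¬ t ≤ x := by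
  constructor
  · intro h hx
    exact ht.1 (le_bot_iff.mp (le_inf hx h |>.trans_eq (inf_compl_eq_bot)))
  · intro h
    rcases (ht.le_iff.mp (inf_le_left : t ⊓ x ≤ t)) with h0 | h0
    · exact le_compl_iff_disjoint_right.mpr (disjoint_iff.mpr h0)
    · exact absurd (h0 ▸ (inf_le_right : t ⊓ x ≤ x)) h

lemma atom_le_sup_iff {t x y : B} (ht : IsAtom t) : t ≤ x ⊔ y ↔ t ≤ x ∨ t ≤ y := by
  constructor
  · intro h
    by_cases hx : t ≤ x
    · exact Or.inl hx
    · right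
      have h1 : t ≤ xᶜ := (atom_le_compl_iff ht).mpr hx
      calc t ≤ (x ⊔ y) ⊓ xᶜ := le_inf h h1
        _ = (x ⊓ xᶜ) ⊔ (y ⊓ xᶜ) := inf_sup_right _ _ _
        _ ≤ y := by simp
  · rintro (h | h) <;> [exact h.trans le_sup_left; exact h.trans le_sup_right]

lemma atom_le_atom_iff {t c : B} (ht : IsAtom t) (hc : IsAtom c) : t ≤ c ↔ t = c := by
  constructor
  · intro h
    rcases hc.le_iff.mp h with h0 | h0
    · exact absurd h0 ht.1
    · exact h0
  · rintro rfl; rfl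

lemma eq_of_atom_le_iff [Fintype B] {x y : B}
    (h : ∀ t : B, IsAtom t → (t ≤ x ↔ t ≤ y)) : x = y := by
  have key : ∀ u v : B, (∀ t : B, IsAtom t → t ≤ u → t ≤ v) → u ≤ v := by
    intro u v huv
    by_contra hle
    have hne : u \ v ≠ ⊥ := fun hb => hle (sdiff_eq_bot_iff.mp hb)
    have hA : u \ v = ⊥ ∨ ∃ t : B, IsAtom t ∧ t ≤ u \ v := eq_bot_or_exists_atom_le _
    rcases hA.resolve_left hne with ⟨t, ht, htle⟩
    have h1 : t ≤ u := htle.trans sdiff_le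
    have h2 : t ≤ vᶜ := by
      have h3 := htle
      rw [sdiff_eq] at h3
      exact h3.trans inf_le_right
    exact (atom_le_compl_iff ht).mp h2 (huv t ht h1)
  exact le_antisymm (key x y fun t ht => (h t ht).mp) (key y x fun t ht => (h t ht).mpr)

variable (c₁ c₂ : B)

/-- The atom-swap map. -/
def swapMap (x : B) : B :=
  (x ⊓ c₁ᶜ ⊓ c₂ᶜ) ⊔ (if c₁ ≤ x then c₂ else ⊥) ⊔ (if c₂ ≤ x then c₁ else ⊥)

variable {c₁ c₂ : B}

lemma swap_isAtom (h₁ : IsAtom c₁) (h₂ : IsAtom c₂) {t : B} (ht : IsAtom t) :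
    IsAtom (Equiv.swap c₁ c₂ t) := by
  rcases eq_or_ne t c₁ with rfl | e1
  · rwa [Equiv.swap_apply_left]
  rcases eq_or_ne t c₂ with rfl | e2
  · rwa [Equiv.swap_apply_right]
  · rwa [Equiv.swap_apply_of_ne_of_ne e1 e2]

lemma atom_le_swapMap (h₁ : IsAtom c₁) (h₂ : IsAtom c₂) {t x : B} (ht : IsAtom t) :
    t ≤ swapMap c₁ c₂ x ↔ Equiv.swap c₁ c₂ t ≤ x := by
  have e1 : t ≤ c₁ ↔ t = c₁ := atom_le_atom_iff ht h₁
  have e2 : t ≤ c₂ ↔ t = c₂ := atom_le_atom_iff ht h₂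
  have n1 : t ≤ c₁ᶜ ↔ ¬ t = c₁ := by rw [atom_le_compl_iff ht, e1]
  have n2 : t ≤ c₂ᶜ ↔ ¬ t = c₂ := by rw [atom_le_compl_iff ht, e2]
  simp only [swapMap, atom_le_sup_iff ht, le_inf_iff, n1, n2]
  rcases eq_or_ne t c₁ with rfl | d1
  · rw [Equiv.swap_apply_left]
    split_ifs with hx1 hx2 <;>
      simp_all [e1, e2, le_bot_iff, ht.1] <;> (try rintro rfl) <;> simp_all
  rcases eq_or_ne t c₂ with rfl | d2
  · rw [Equiv.swap_apply_right]
    split_ifs with hx1 hx2 <;>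
      simp_all [e1, e2, le_bot_iff, ht.1] <;> (try rintro rfl) <;> simp_all
  · rw [Equiv.swap_apply_of_ne_of_ne d1 d2]
    split_ifs with hx1 hx2 <;>
      simp_all [e1, e2, le_bot_iff, ht.1] <;> (try rintro rfl) <;> simp_all

variable [Fintype B]

lemma swapMap_inf (h₁ : IsAtom c₁) (h₂ : IsAtom c₂) (x y : B) :
    swapMap c₁ c₂ (x ⊓ y) = swapMap c₁ c₂ x ⊓ swapMap c₁ c₂ y :=
  eq_of_atom_le_iff fun t ht => by
    rw [atom_le_swapMap h₁ h₂ ht, le_inf_iff, le_inf_iff, atom_le_swapMap h₁ h₂ ht,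
      atom_le_swapMap h₁ h₂ ht]

lemma swapMap_sup (h₁ : IsAtom c₁) (h₂ : IsAtom c₂) (x y : B) :
    swapMap c₁ c₂ (x ⊔ y) = swapMap c₁ c₂ x ⊔ swapMap c₁ c₂ y :=
  eq_of_atom_le_iff fun t ht => by
    rw [atom_le_swapMap h₁ h₂ ht, atom_le_sup_iff (swap_isAtom h₁ h₂ ht), atom_le_sup_iff ht,
      atom_le_swapMap h₁ h₂ ht, atom_le_swapMap h₁ h₂ ht]

lemma swapMap_compl (h₁ : IsAtom c₁) (h₂ : IsAtom c₂) (x : B) :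
    swapMap c₁ c₂ xᶜ = (swapMap c₁ c₂ x)ᶜ :=
  eq_of_atom_le_iff fun t ht => by
    rw [atom_le_swapMap h₁ h₂ ht, atom_le_compl_iff (swap_isAtom h₁ h₂ ht),
      atom_le_compl_iff ht, atom_le_swapMap h₁ h₂ ht]

lemma swapMap_swapMap (h₁ : IsAtom c₁) (h₂ : IsAtom c₂) (x : B) :
    swapMap c₁ c₂ (swapMap c₁ c₂ x) = x :=
  eq_of_atom_le_iff fun t ht => by
    rw [atom_le_swapMap h₁ h₂ ht, atom_le_swapMap h₁ h₂ (swap_isAtom h₁ h₂ ht),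
      Equiv.swap_apply_self]

lemma swapMap_eq_self (h₁ : IsAtom c₁) (h₂ : IsAtom c₂) {x : B} (hx1 : c₁ ≤ x) (hx2 : c₂ ≤ x) :
    swapMap c₁ c₂ x = x :=
  eq_of_atom_le_iff fun t ht => by
    rw [atom_le_swapMap h₁ h₂ ht]
    rcases eq_or_ne t c₁ with rfl | d1
    · simp [Equiv.swap_apply_left, hx1, hx2]
    rcases eq_or_ne t c₂ with rfl | d2
    · simp [Equiv.swap_apply_right, hx1, hx2]
    · rw [Equiv.swap_apply_of_ne_of_ne d1 d2]

lemma swapMap_image_isImpl (h₁ : IsAtom c₁) (h₂ : IsAtom c₂) {C : Set B}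
    (hC : IsImplSublattice C) : IsImplSublattice (swapMap c₁ c₂ '' C) := by
  obtain ⟨hne, himp, hinf⟩ := hC
  refine ⟨hne.image _, ?_, ?_⟩
  · rintro _ ⟨x, hx, rfl⟩ _ ⟨y, hy, rfl⟩
    exact ⟨xᶜ ⊔ y, himp x hx y hy, by rw [swapMap_sup h₁ h₂, swapMap_compl h₁ h₂]⟩
  · rintro _ ⟨x, hx, rfl⟩ _ ⟨y, hy, rfl⟩
    exact ⟨x ⊓ y, hinf x hx y hy, (swapMap_inf h₁ h₂ x y)⟩

lemma swapMap_image_image (h₁ : IsAtom c₁) (h₂ : IsAtom c₂) (S : Set B) :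
    swapMap c₁ c₂ '' (swapMap c₁ c₂ '' S) = S := by
  rw [← Set.image_comp]
  have h : swapMap c₁ c₂ ∘ swapMap c₁ c₂ = id := funext (swapMap_swapMap h₁ h₂)
  rw [h, Set.image_id]

lemma swapMap_injective (h₁ : IsAtom c₁) (h₂ : IsAtom c₂) :
    Function.Injective (swapMap c₁ c₂ : B → B) :=
  Function.LeftInverse.injective (g := swapMap c₁ c₂) (swapMap_swapMap h₁ h₂)

end Aux

/-- Lemma `lem:ufsAbove`. Let `A ∈ 𝒜` with least element `a`, and let
`c₁, c₂` be atoms of `B` below `a`.  Then the intervals `[A, [c₁,⊤]]` and `[A, [c₂,⊤]]`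
of `𝒜` are order-isomorphic. -/
theorem intervals_above_atoms_orderIso {B : Type*} [Fintype B] [BooleanAlgebra B]
    [Nontrivial B] (A : Set B) (hA : IsImplSublattice A) (a : B) (ha : IsLeast A a)
    (c₁ c₂ : B) (h₁ : IsAtom c₁) (h₂ : IsAtom c₂) (hc₁ : c₁ ≤ a) (hc₂ : c₂ ≤ a) :
    Nonempty ({C : ImplLat B // A ⊆ C.1 ∧ C.1 ⊆ Set.Ici c₁} ≃o
      {C : ImplLat B // A ⊆ C.1 ∧ C.1 ⊆ Set.Ici c₂}) := by
  have hax : ∀ x ∈ A, c₁ ≤ x ∧ c₂ ≤ x := fun x hx =>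
    ⟨hc₁.trans (ha.2 hx), hc₂.trans (ha.2 hx)⟩
  have hAsub : ∀ {C : Set B}, A ⊆ C → A ⊆ swapMap c₁ c₂ '' C := by
    intro C hAC x hx
    exact ⟨x, hAC hx, swapMap_eq_self h₁ h₂ (hax x hx).1 (hax x hx).2⟩
  have hIci12 : ∀ {C : Set B}, C ⊆ Set.Ici c₁ → swapMap c₁ c₂ '' C ⊆ Set.Ici c₂ := by
    rintro C hC _ ⟨y, hy, rfl⟩
    rw [Set.mem_Ici, atom_le_swapMap h₁ h₂ h₂, Equiv.swap_apply_right]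
    exact hC hy
  have hIci21 : ∀ {C : Set B}, C ⊆ Set.Ici c₂ → swapMap c₁ c₂ '' C ⊆ Set.Ici c₁ := by
    rintro C hC _ ⟨y, hy, rfl⟩
    rw [Set.mem_Ici, atom_le_swapMap h₁ h₂ h₁, Equiv.swap_apply_left]
    exact hC hy
  refine ⟨{
    toFun := fun C => ⟨⟨swapMap c₁ c₂ '' C.1.1, swapMap_image_isImpl h₁ h₂ C.1.2⟩,
      hAsub C.2.1, hIci12 C.2.2⟩
    invFun := fun C => ⟨⟨swapMap c₁ c₂ '' C.1.1, swapMap_image_isImpl h₁ h₂ C.1.2⟩,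
      hAsub C.2.1, hIci21 C.2.2⟩
    left_inv := fun C => by
      apply Subtype.ext; apply Subtype.ext
      exact swapMap_image_image h₁ h₂ C.1.1
    right_inv := fun C => by
      apply Subtype.ext; apply Subtype.ext
      exact swapMap_image_image h₁ h₂ C.1.1
    map_rel_iff' := by
      intro C D
      simp only [Equiv.coe_fn_mk, Subtype.mk_le_mk, ← Subtype.coe_le_coe]
      exact Set.image_subset_image_iff (swapMap_injective h₁ h₂) }⟩
end
end

section
/- Let A be an implication sublattice of B with least element a := min A, and suppose a ≠ 0. Then for any atom c of B with c ≤ a, μ(A, B) = −|a| · μ(A, [c,1]), where μ is the Möbius function of the finite lattice 𝒜 and |a| is the number of atoms of B below a. -/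
open scoped Classical

noncomputable section

lemma isImplSublattice_univ {B : Type*} [BooleanAlgebra B] :
    IsImplSublattice (Set.univ : Set B) :=
  ⟨⟨⊤, trivial⟩, fun _ _ _ _ => trivial, fun _ _ _ _ => trivial⟩

lemma isImplSublattice_Ici {B : Type*} [BooleanAlgebra B] (c : B) :
    IsImplSublattice (Set.Ici c) :=
  ⟨⟨c, le_refl c⟩, fun _ _ _ hy => le_sup_of_le_right hy, fun _ hx _ hy => le_inf hx hy⟩

lemma isImplSublattice_singleton_top {B : Type*} [BooleanAlgebra B] :
    IsImplSublattice ({⊤} : Set B) := by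
  refine ⟨⟨⊤, rfl⟩, ?_, ?_⟩ <;> intro x hx y hy <;> simp_all

/-- `|x|`: the number of atoms of `B` lying below `x`. -/
def natomsBelow {B : Type*} [BooleanAlgebra B] [Fintype B] (x : B) : ℕ :=
  (Finset.univ.filter fun c : B => IsAtom c ∧ c ≤ x).card

/-! ### Auxiliary material -/

set_option linter.unusedSectionVars false

open Finset IncidenceAlgebra

section Atoms
variable {B : Type*} [Fintype B] [BooleanAlgebra B]

lemma atom_le_sup' {c x y : B} (hc : IsAtom c) : c ≤ x ⊔ y ↔ c ≤ x ∨ c ≤ y := by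
  constructor
  · intro h
    by_contra hn
    push_neg at hn
    have h1 : c ⊓ x = ⊥ := (hc.le_iff.mp inf_le_left).resolve_right
      (fun he => hn.1 (he ▸ inf_le_right))
    have h2 : c ⊓ y = ⊥ := (hc.le_iff.mp inf_le_left).resolve_right
      (fun he => hn.2 (he ▸ inf_le_right))
    have h3 : ⊥ ⊔ ⊥ = c := by
      have h4 := inf_eq_left.mpr h
      rw [inf_sup_left, h1, h2] at h4
      exact h4
    exact hc.1 (by simpa using h3.symm)
  · rintro (h | h)
    · exact h.trans le_sup_left
    · exact h.trans le_sup_right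

lemma atom_le_compl' {c x : B} (hc : IsAtom c) : c ≤ xᶜ ↔ ¬ c ≤ x := by
  constructor
  · intro h hx
    exact hc.1 (le_bot_iff.mp (by simpa using le_inf hx h))
  · intro h
    rw [le_compl_iff_disjoint_right, disjoint_iff]
    exact (hc.le_iff.mp inf_le_left).resolve_right (fun he => h (he ▸ inf_le_right))

lemma atom_ne_le_bot {c : B} : IsAtom c → ¬ c ≤ (⊥ : B) := fun hc h => hc.1 (le_bot_iff.mp h)

lemma atom_le_atom {e c : B} (he : IsAtom e) (hc : IsAtom c) : e ≤ c ↔ e = c :=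
  ⟨fun h => (hc.le_iff.mp h).resolve_left he.1, fun h => h ▸ le_rfl⟩

lemma le_iff_atoms {x y : B} : x ≤ y ↔ ∀ c : B, IsAtom c → c ≤ x → c ≤ y :=
  BooleanAlgebra.le_iff_atom_le_imp

lemma eq_iff_atoms {x y : B} : x = y ↔ ∀ c : B, IsAtom c → (c ≤ x ↔ c ≤ y) :=
  BooleanAlgebra.eq_iff_atom_le_iff

lemma exists_atom_le' {x : B} (hx : x ≠ ⊥) : ∃ c : B, IsAtom c ∧ c ≤ x :=
  (IsAtomic.eq_bot_or_exists_atom_le x).resolve_left hx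

end Atoms

section ImplBasic
variable {B : Type*} [Fintype B] [BooleanAlgebra B]

lemma IsImplSublattice.top_mem {A : Set B} (hA : IsImplSublattice A) : ⊤ ∈ A := by
  obtain ⟨⟨x, hx⟩, himp, -⟩ := hA
  have h := himp x hx x hx
  rwa [compl_sup_eq_top] at h

lemma IsImplSublattice.sup_mem {A : Set B} (hA : IsImplSublattice A) {x y : B}
    (hx : x ∈ A) (hy : y ∈ A) : x ⊔ y ∈ A := by
  have h1 := hA.2.1 x hx y hy
  have h2 := hA.2.1 _ h1 y hy
  have he : (xᶜ ⊔ y)ᶜ ⊔ y = x ⊔ y := by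
    rw [compl_sup, compl_compl, sup_inf_right, compl_sup_eq_top, inf_top_eq]
  rwa [he] at h2

lemma IsImplSublattice.exists_least {A : Set B} (hA : IsImplSublattice A) :
    ∃ b, IsLeast A b := by
  have hne : A.toFinset.Nonempty := by
    obtain ⟨x, hx⟩ := hA.1
    exact ⟨x, Set.mem_toFinset.mpr hx⟩
  refine ⟨A.toFinset.inf' hne id, ?_, ?_⟩
  · exact Finset.inf'_mem A hA.2.2 _ hne id (fun i hi => Set.mem_toFinset.mp hi)
  · intro t ht
    exact Finset.inf'_le id (Set.mem_toFinset.mpr ht)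

/-- The implication sublattice generated by a set. -/
def genImpl (S : Set B) : Set B := ⋂₀ {Y : Set B | IsImplSublattice Y ∧ S ⊆ Y}

lemma isImplSublattice_genImpl (S : Set B) : IsImplSublattice (genImpl S) := by
  refine ⟨⟨⊤, ?_⟩, ?_, ?_⟩
  · exact Set.mem_sInter.mpr (fun Y hY => hY.1.top_mem)
  · intro x hx y hy
    exact Set.mem_sInter.mpr (fun Y hY =>
      hY.1.2.1 x (Set.mem_sInter.mp hx Y hY) y (Set.mem_sInter.mp hy Y hY))
  · intro x hx y hy
    exact Set.mem_sInter.mpr (fun Y hY =>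
      hY.1.2.2 x (Set.mem_sInter.mp hx Y hY) y (Set.mem_sInter.mp hy Y hY))

lemma subset_genImpl (S : Set B) : S ⊆ genImpl S :=
  fun x hx => Set.mem_sInter.mpr (fun _ hY => hY.2 hx)

lemma genImpl_subset {S Y : Set B} (hY : IsImplSublattice Y) (hS : S ⊆ Y) : genImpl S ⊆ Y :=
  fun x hx => Set.mem_sInter.mp hx Y ⟨hY, hS⟩

instance : OrderTop (ImplLat B) where
  top := ⟨Set.univ, isImplSublattice_univ⟩
  le_top := fun S => Set.subset_univ S.1

end ImplBasic

section MuIso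

lemma mu_orderIso_aux {α β : Type*} [Fintype α] [Fintype β] [PartialOrder α] [PartialOrder β]
    [LocallyFiniteOrder α] [LocallyFiniteOrder β] [DecidableEq α] [DecidableEq β]
    (e : α ≃o β) : ∀ (n : ℕ) (a b : α), (Finset.Icc a b).card ≤ n →
      mu ℤ (e a) (e b) = mu ℤ a b := by
  intro n
  induction n with
  | zero =>
    intro a b h
    have hab : ¬ a ≤ b := by
      intro hle
      have : a ∈ Finset.Icc a b := by simp [hle]
      simp [Finset.card_eq_zero.mp (Nat.le_zero.mp h)] at this
    rw [apply_eq_zero_of_not_le hab, apply_eq_zero_of_not_le (fun hh => hab (e.le_iff_le.mp hh))]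
  | succ n ih =>
    intro a b h
    by_cases hab : a = b
    · subst hab; simp
    by_cases hle : a ≤ b
    · rw [mu_eq_neg_sum_Ico_of_ne hab, mu_eq_neg_sum_Ico_of_ne (fun hh => hab (e.injective hh))]
      have himg : Finset.Ico (e a) (e b) = (Finset.Ico a b).image e := by
        ext y
        simp only [Finset.mem_Ico, Finset.mem_image]
        constructor
        · intro ⟨h1, h2⟩
          exact ⟨e.symm y, by simp [← e.le_iff_le, ← e.lt_iff_lt, h1, h2], by simp⟩
        · rintro ⟨x, ⟨hx1, hx2⟩, rfl⟩
          exact ⟨e.le_iff_le.mpr hx1, e.lt_iff_lt.mpr hx2⟩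
      rw [himg, Finset.sum_image (fun x _ y _ hxy => e.injective hxy)]
      congr 1
      apply Finset.sum_congr rfl
      intro x hx
      obtain ⟨hax, hxb⟩ := Finset.mem_Ico.mp hx
      apply ih
      have hss : Finset.Icc a x ⊂ Finset.Icc a b := by
        constructor
        · intro y hy
          obtain ⟨h1, h2⟩ := Finset.mem_Icc.mp hy
          exact Finset.mem_Icc.mpr ⟨h1, h2.trans hxb.le⟩
        · intro hsub
          have hbm : b ∈ Finset.Icc a x := hsub (Finset.mem_Icc.mpr ⟨hle, le_rfl⟩)
          exact absurd (Finset.mem_Icc.mp hbm).2 hxb.not_ge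
      have := Finset.card_lt_card hss
      omega
    · rw [apply_eq_zero_of_not_le hle,
        apply_eq_zero_of_not_le (fun hh => hle (e.le_iff_le.mp hh))]

lemma mu_orderIso {α β : Type*} [Fintype α] [Fintype β] [PartialOrder α] [PartialOrder β]
    [LocallyFiniteOrder α] [LocallyFiniteOrder β] [DecidableEq α] [DecidableEq β]
    (e : α ≃o β) (a b : α) : mu ℤ (e a) (e b) = mu ℤ a b :=
  mu_orderIso_aux e (Finset.Icc a b).card a b le_rfl

end MuIso

section Weisner

lemma weisner_sum {α : Type*} [Fintype α] [PartialOrder α] [OrderTop α]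
    [LocallyFiniteOrder α] [DecidableEq α]
    (a z : α) (hz : ¬ z ≤ a) (j : α → α) (hj : ∀ x y, j x ≤ y ↔ x ≤ y ∧ z ≤ y)
    (s : Finset α) (hs : ∀ x, x ∈ s ↔ (a ≤ x ∧ j x = ⊤)) :
    ∑ x ∈ s, mu ℤ a x = 0 := by
  have key : ∀ x : α,
      (∑ y ∈ Finset.univ, if a ≤ x ∧ x ≤ y ∧ z ≤ y then mu ℤ a x * mu ℤ y ⊤ else 0)
        = if a ≤ x ∧ j x = ⊤ then mu ℤ a x else 0 := by
    intro x
    by_cases hax : a ≤ x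
    · have hset : Finset.univ.filter (fun y => a ≤ x ∧ x ≤ y ∧ z ≤ y) = Finset.Icc (j x) ⊤ := by
        ext y
        simp [Finset.mem_Icc, le_top, hj, hax]
      rw [← Finset.sum_filter, hset, ← Finset.mul_sum, sum_Icc_mu_left]
      simp [hax, mul_ite]
    · rw [Finset.sum_eq_zero (fun y _ => by simp [hax]), if_neg (by simp [hax])]
  have key2 : ∀ y : α,
      (∑ x ∈ Finset.univ, if a ≤ x ∧ x ≤ y ∧ z ≤ y then mu ℤ a x * mu ℤ y ⊤ else 0) = 0 := by
    intro y
    by_cases hzy : z ≤ y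
    · have hset : Finset.univ.filter (fun x => a ≤ x ∧ x ≤ y ∧ z ≤ y) = Finset.Icc a y := by
        ext x
        simp [Finset.mem_Icc, hzy]
      rw [← Finset.sum_filter, hset, ← Finset.sum_mul, sum_Icc_mu_right]
      have hay : a ≠ y := fun h => hz (h ▸ hzy)
      simp [hay]
    · exact Finset.sum_eq_zero (fun x _ => by simp [hzy])
  have hsf : s = Finset.univ.filter (fun x => a ≤ x ∧ j x = ⊤) := by
    ext x; simp [hs]
  calc ∑ x ∈ s, mu ℤ a x
      = ∑ x ∈ Finset.univ, if a ≤ x ∧ j x = ⊤ then mu ℤ a x else 0 := by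
        rw [hsf]; exact Finset.sum_filter _ _
    _ = ∑ x ∈ Finset.univ, ∑ y ∈ Finset.univ,
          (if a ≤ x ∧ x ≤ y ∧ z ≤ y then mu ℤ a x * mu ℤ y ⊤ else 0) := by
        exact (Finset.sum_congr rfl (fun x _ => (key x))).symm
    _ = ∑ y ∈ Finset.univ, ∑ x ∈ Finset.univ,
          (if a ≤ x ∧ x ≤ y ∧ z ≤ y then mu ℤ a x * mu ℤ y ⊤ else 0) := Finset.sum_comm
    _ = 0 := Finset.sum_eq_zero (fun y _ => key2 y)

end Weisner

section Classify
variable {B : Type*} [Fintype B] [BooleanAlgebra B]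

lemma classify {A : Set B} {a : B} (ha : IsLeast A a)
    {X : Set B} (hX : IsImplSublattice X) (hAX : A ⊆ X) :
    (∀ Y : Set B, IsImplSublattice Y → X ⊆ Y → (⊥ : B) ∈ Y → Y = Set.univ) ↔
      (X = Set.univ ∨ ∃ e : B, IsAtom e ∧ e ≤ a ∧ X = Set.Ici e) := by
  constructor
  · intro hQ
    by_cases hbot : (⊥ : B) ∈ X
    · exact Or.inl (hQ X hX subset_rfl hbot)
    right
    -- separation of atoms by elements of X
    have hsep : ∀ e f : B, IsAtom e → IsAtom f → e ≠ f → ∃ t ∈ X, ¬ (e ≤ t ↔ f ≤ t) := by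
      intro e f he hf hef
      by_contra hn
      push_neg at hn
      have hn' : ∀ t ∈ X, (e ≤ t ↔ f ≤ t) := hn
      set Y : Set B := {x | ∀ e' f' : B, IsAtom e' → IsAtom f' →
        (∀ t ∈ X, (e' ≤ t ↔ f' ≤ t)) → (e' ≤ x ↔ f' ≤ x)} with hYdef
      have hYimpl : IsImplSublattice Y := by
        refine ⟨⟨⊤, ?_⟩, ?_, ?_⟩
        · intro e' f' he' hf' _
          exact iff_of_true le_top le_top
        · intro x hx y hy e' f' he' hf' hp
          rw [atom_le_sup' he', atom_le_sup' hf', atom_le_compl' he', atom_le_compl' hf',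
            hx e' f' he' hf' hp, hy e' f' he' hf' hp]
        · intro x hx y hy e' f' he' hf' hp
          rw [le_inf_iff, le_inf_iff, hx e' f' he' hf' hp, hy e' f' he' hf' hp]
      have hXY : X ⊆ Y := fun t ht e' f' _ _ hp => hp t ht
      have hbotY : (⊥ : B) ∈ Y := fun e' f' he' hf' _ =>
        iff_of_false (atom_ne_le_bot he') (atom_ne_le_bot hf')
      have hYuniv : Y = Set.univ := hQ Y hYimpl hXY hbotY
      have heY : e ∈ Y := hYuniv ▸ Set.mem_univ e
      have hfe : f ≤ e := (heY e f he hf hn').mp le_rfl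
      exact hef ((atom_le_atom hf he).mp hfe).symm
    obtain ⟨b, hbX, hbleast⟩ := hX.exists_least
    have hbne : b ≠ ⊥ := fun h => hbot (h ▸ hbX)
    obtain ⟨e, he, heb⟩ := exists_atom_le' hbne
    have huniq : ∀ f : B, IsAtom f → f ≤ b → f = e := by
      intro f hf hfb
      by_contra hfe
      obtain ⟨t, htX, hsep'⟩ := hsep f e hf he hfe
      exact hsep' (iff_of_true (hfb.trans (hbleast htX)) (heb.trans (hbleast htX)))
    have hbe : b = e := by
      refine le_antisymm ?_ heb
      by_contra hble
      have hne : b ⊓ eᶜ ≠ ⊥ := by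
        intro h
        apply hble
        have : b \ e = ⊥ := by rwa [sdiff_eq]
        exact sdiff_eq_bot_iff.mp this
      obtain ⟨f, hf, hfle⟩ := exists_atom_le' hne
      have hfb : f ≤ b := hfle.trans inf_le_left
      have hfe : f = e := huniq f hf hfb
      have hfc : f ≤ eᶜ := hfle.trans inf_le_right
      rw [hfe] at hfc
      exact (atom_le_compl' he).mp hfc le_rfl
    have heX : e ∈ X := hbe ▸ hbX
    have hleast : ∀ t ∈ X, e ≤ t := fun t ht => hbe ▸ hbleast ht
    refine ⟨e, he, hleast a (hAX ha.1), ?_⟩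
    -- X = Ici e
    have hsupm : ∀ f : B, IsAtom f → e ⊔ f ∈ X := by
      intro f hf
      by_cases hfe : f = e
      · subst hfe
        simpa using heX
      set s : Finset B := Finset.univ.filter (fun t => t ∈ X ∧ f ≤ t) with hs
      have hsne : s.Nonempty := ⟨⊤, by simp [hs, hX.top_mem]⟩
      set m := s.inf' hsne id with hm
      have hmX : m ∈ X :=
        Finset.inf'_mem X hX.2.2 s hsne id (fun i hi => ((Finset.mem_filter.mp hi).2).1)
      have hfm : f ≤ m := Finset.le_inf' hsne id (fun t ht => (Finset.mem_filter.mp ht).2.2)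
      have hem : e ≤ m := Finset.le_inf' hsne id (fun t ht => hleast t (Finset.mem_filter.mp ht).2.1)
      have hmef : m ≤ e ⊔ f := by
        rw [le_iff_atoms]
        intro g hg hgm
        rw [atom_le_sup' hg]
        by_contra hgef
        push_neg at hgef
        have hgf : g ≠ f := fun h => hgef.2 (h ▸ le_rfl)
        obtain ⟨t, htX, hsept⟩ := hsep f g hf hg (fun h => hgf h.symm)
        by_cases hft : f ≤ t
        · have hgt : ¬ g ≤ t := fun h => hsept (iff_of_true hft h)
          have hmt : m ≤ t := Finset.inf'_le id (by simp [hs, htX, hft])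
          exact hgt (hgm.trans hmt)
        · have hgt : g ≤ t := by
            by_contra h
            exact hsept (iff_of_false hft h)
          set u := m ⊓ (tᶜ ⊔ e) with hu
          have huX : u ∈ X := hX.2.2 m hmX _ (hX.2.1 t htX e heX)
          have hfu : f ≤ u :=
            le_inf hfm (((atom_le_compl' hf).mpr hft).trans le_sup_left)
          have hmu : m ≤ u := Finset.inf'_le id (Finset.mem_filter.mpr ⟨Finset.mem_univ _, huX, hfu⟩)
          have hgu : g ≤ tᶜ ⊔ e := (hgm.trans hmu).trans inf_le_right
          rcases (atom_le_sup' hg).mp hgu with h | h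
          · exact (atom_le_compl' hg).mp h hgt
          · exact hgef.1 h
      have hfinal : e ⊔ f = m := le_antisymm (sup_le hem hfm) hmef
      exact hfinal ▸ hmX
    apply Set.eq_of_subset_of_subset
    · intro t ht
      exact hleast t ht
    · intro x hx
      have hex : e ≤ x := hx
      set s := Finset.univ.filter (fun f : B => IsAtom f ∧ f ≤ x) with hs
      have hsne : s.Nonempty := ⟨e, by simp [hs, he, hex]⟩
      have hxe : x = s.sup' hsne (fun f => e ⊔ f) := by
        apply le_antisymm
        · rw [le_iff_atoms]
          intro g hg hgx
          exact le_trans (le_sup_right : g ≤ e ⊔ g) (Finset.le_sup' _ (by simp [hs, hg, hgx]))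
        · apply Finset.sup'_le
          intro f hf
          obtain ⟨hfa, hfx⟩ := (Finset.mem_filter.mp hf).2
          exact sup_le hx hfx
      rw [hxe]
      exact Finset.sup'_mem X (fun u hu v hv => hX.sup_mem hu hv) s hsne _
        (fun f hf => hsupm f (Finset.mem_filter.mp hf).2.1)
  · rintro (rfl | ⟨e, he, hea, rfl⟩)
    · intro Y _ hXY _
      exact Set.eq_univ_of_univ_subset hXY
    · intro Y hY hXY hbY
      apply Set.eq_univ_iff_forall.mpr
      intro x
      by_cases hex : e ≤ x
      · exact hXY hex
      · have hxc : e ≤ xᶜ := (atom_le_compl' he).mpr hex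
        have h1 : xᶜ ∈ Y := hXY hxc
        have h2 : xᶜᶜ ⊔ ⊥ ∈ Y := hY.2.1 _ h1 ⊥ hbY
        simpa using h2

end Classify

section Swap
variable {B : Type*} [Fintype B] [BooleanAlgebra B]

/-- The transposition of two atoms. -/
def aswap (c d e : B) : B := if e = c then d else if e = d then c else e

/-- The automorphism of `B` swapping the atoms `c` and `d`. -/
def phiSwap (c d x : B) : B :=
  if (c ≤ x ↔ d ≤ x) then x else if c ≤ x then (x ⊓ cᶜ) ⊔ d else (x ⊓ dᶜ) ⊔ c

lemma isAtom_aswap {c d : B} (hc : IsAtom c) (hd : IsAtom d) {e : B} (he : IsAtom e) :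
    IsAtom (aswap c d e) := by
  unfold aswap
  split_ifs <;> assumption

lemma aswap_aswap {c d e : B} : aswap c d (aswap c d e) = e := by
  unfold aswap
  split_ifs <;> simp_all

lemma atom_le_phiSwap {c d : B} (hc : IsAtom c) (hd : IsAtom d)
    {e : B} (he : IsAtom e) (x : B) :
    e ≤ phiSwap c d x ↔ aswap c d e ≤ x := by
  unfold phiSwap aswap
  by_cases hcx : c ≤ x <;> by_cases hdx : d ≤ x <;>
    by_cases hec : e = c <;> by_cases hed : e = d <;>
      simp_all [atom_le_sup' he, atom_le_compl' he, le_inf_iff,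
        atom_le_atom he hc, atom_le_atom he hd, atom_le_sup' hc, atom_le_compl' hc,
        atom_le_sup' hd, atom_le_compl' hd, atom_le_atom hc hd, atom_le_atom hd hc]

lemma phiSwap_phiSwap {c d : B} (hc : IsAtom c) (hd : IsAtom d) (x : B) :
    phiSwap c d (phiSwap c d x) = x := by
  rw [eq_iff_atoms]
  intro g hg
  rw [atom_le_phiSwap hc hd hg, atom_le_phiSwap hc hd (isAtom_aswap hc hd hg), aswap_aswap]

lemma phiSwap_inf {c d : B} (hc : IsAtom c) (hd : IsAtom d) (x y : B) :
    phiSwap c d (x ⊓ y) = phiSwap c d x ⊓ phiSwap c d y := by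
  rw [eq_iff_atoms]
  intro g hg
  rw [le_inf_iff, atom_le_phiSwap hc hd hg, atom_le_phiSwap hc hd hg,
    atom_le_phiSwap hc hd hg, le_inf_iff]

lemma phiSwap_himp {c d : B} (hc : IsAtom c) (hd : IsAtom d) (x y : B) :
    phiSwap c d (xᶜ ⊔ y) = (phiSwap c d x)ᶜ ⊔ phiSwap c d y := by
  rw [eq_iff_atoms]
  intro g hg
  rw [atom_le_phiSwap hc hd hg, atom_le_sup' (isAtom_aswap hc hd hg), atom_le_sup' hg,
    atom_le_compl' (isAtom_aswap hc hd hg), atom_le_compl' hg,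
    atom_le_phiSwap hc hd hg, atom_le_phiSwap hc hd hg]

lemma phiSwap_image_impl {c d : B} (hc : IsAtom c) (hd : IsAtom d)
    {S : Set B} (hS : IsImplSublattice S) : IsImplSublattice (phiSwap c d '' S) := by
  refine ⟨hS.1.image _, ?_, ?_⟩
  · rintro x ⟨u, hu, rfl⟩ y ⟨v, hv, rfl⟩
    exact ⟨uᶜ ⊔ v, hS.2.1 u hu v hv, phiSwap_himp hc hd u v⟩
  · rintro x ⟨u, hu, rfl⟩ y ⟨v, hv, rfl⟩
    exact ⟨u ⊓ v, hS.2.2 u hu v hv, phiSwap_inf hc hd u v⟩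

lemma phiSwap_injective {c d : B} (hc : IsAtom c) (hd : IsAtom d) :
    Function.Injective (phiSwap c d) :=
  Function.LeftInverse.injective (phiSwap_phiSwap hc hd)

/-- The order automorphism of `ImplLat B` induced by swapping two atoms. -/
def phiEquiv {c d : B} (hc : IsAtom c) (hd : IsAtom d) : ImplLat B ≃o ImplLat B where
  toFun S := ⟨phiSwap c d '' S.1, phiSwap_image_impl hc hd S.2⟩
  invFun S := ⟨phiSwap c d '' S.1, phiSwap_image_impl hc hd S.2⟩
  left_inv S := by
    apply Subtype.ext
    simp only
    rw [← Set.image_comp]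
    have : phiSwap c d ∘ phiSwap c d = id := funext (phiSwap_phiSwap hc hd)
    rw [this, Set.image_id]
  right_inv S := by
    apply Subtype.ext
    simp only
    rw [← Set.image_comp]
    have : phiSwap c d ∘ phiSwap c d = id := funext (phiSwap_phiSwap hc hd)
    rw [this, Set.image_id]
  map_rel_iff' := by
    intro S T
    constructor
    · intro h
      exact (Set.image_subset_image_iff (phiSwap_injective hc hd)).mp h
    · intro h
      exact Set.image_mono h

end Swap

section Symmetry
variable {B : Type*} [Fintype B] [BooleanAlgebra B]

lemma mu_Ici_symm {A : Set B} (hA : IsImplSublattice A) {a : B} (ha : IsLeast A a)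
    {c d : B} (hc : IsAtom c) (hd : IsAtom d) (hca : c ≤ a) (hda : d ≤ a) :
    mu ℤ (⟨A, hA⟩ : ImplLat B) ⟨Set.Ici c, isImplSublattice_Ici c⟩ =
      mu ℤ (⟨A, hA⟩ : ImplLat B) ⟨Set.Ici d, isImplSublattice_Ici d⟩ := by
  by_cases hcd : c = d
  · subst hcd; rfl
  have key := mu_orderIso (phiEquiv hc hd)
    (⟨A, hA⟩ : ImplLat B) ⟨Set.Ici c, isImplSublattice_Ici c⟩
  have hfixA : phiEquiv hc hd (⟨A, hA⟩ : ImplLat B) = ⟨A, hA⟩ := by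
    apply Subtype.ext
    show phiSwap c d '' A = A
    have hfix : ∀ x ∈ A, phiSwap c d x = x := by
      intro x hx
      have h1 : c ≤ x := hca.trans (ha.2 hx)
      have h2 : d ≤ x := hda.trans (ha.2 hx)
      unfold phiSwap
      rw [if_pos (iff_of_true h1 h2)]
    apply Set.eq_of_subset_of_subset
    · rintro y ⟨u, hu, rfl⟩
      rw [hfix u hu]; exact hu
    · intro x hx
      exact ⟨x, hx, hfix x hx⟩
  have haswapd : aswap c d d = c := by
    unfold aswap
    rw [if_neg (fun h => hcd h.symm), if_pos rfl]
  have haswapc : aswap c d c = d := by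
    unfold aswap
    rw [if_pos rfl]
  have hmapIci : phiEquiv hc hd (⟨Set.Ici c, isImplSublattice_Ici c⟩ : ImplLat B) =
      ⟨Set.Ici d, isImplSublattice_Ici d⟩ := by
    apply Subtype.ext
    show phiSwap c d '' Set.Ici c = Set.Ici d
    apply Set.eq_of_subset_of_subset
    · rintro y ⟨u, hu, rfl⟩
      have : d ≤ phiSwap c d u := by
        rw [atom_le_phiSwap hc hd hd, haswapd]
        exact hu
      exact this
    · intro y hy
      refine ⟨phiSwap c d y, ?_, phiSwap_phiSwap hc hd y⟩
      have : c ≤ phiSwap c d y := by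
        rw [atom_le_phiSwap hc hd hc, haswapc]
        exact hy
      exact this
  rw [hfixA, hmapIci] at key
  exact key.symm

end Symmetry

/-- Let `A ∈ 𝒜` with least element `a ≠ ⊥`.  Then for any atom `c` of
`B` with `c ≤ a`, `μ(A, B) = −|a| · μ(A, [c,⊤])`, where `μ` is the Möbius function of
the finite lattice `𝒜` and `|a|` is the number of atoms of `B` below `a`. -/
theorem mu_eq_neg_card_mul {B : Type*} [Fintype B] [BooleanAlgebra B] [Nontrivial B]
    (A : Set B) (hA : IsImplSublattice A) (a : B) (ha : IsLeast A a) (ha0 : a ≠ ⊥)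
    (c : B) (hc : IsAtom c) (hca : c ≤ a) :
    IncidenceAlgebra.mu ℤ (⟨A, hA⟩ : ImplLat B) ⟨Set.univ, isImplSublattice_univ⟩ =
      -(natomsBelow a : ℤ) *
        IncidenceAlgebra.mu ℤ (⟨A, hA⟩ : ImplLat B) ⟨Set.Ici c, isImplSublattice_Ici c⟩ := by
  set AL : ImplLat B := ⟨A, hA⟩ with hAL
  set z : ImplLat B := ⟨genImpl (A ∪ {⊥}), isImplSublattice_genImpl _⟩ with hz
  set j : ImplLat B → ImplLat B :=
    fun X => ⟨genImpl (X.1 ∪ (A ∪ {⊥})), isImplSublattice_genImpl _⟩ with hjdef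
  have hjspec : ∀ X Y : ImplLat B, j X ≤ Y ↔ X ≤ Y ∧ z ≤ Y := by
    intro X Y
    constructor
    · intro h
      have h1 : X.1 ∪ (A ∪ {⊥}) ⊆ Y.1 := (subset_genImpl _).trans h
      refine ⟨(Set.subset_union_left).trans h1, ?_⟩
      exact genImpl_subset Y.2 ((Set.subset_union_right).trans h1)
    · rintro ⟨h1, h2⟩
      apply genImpl_subset Y.2
      exact Set.union_subset h1 ((subset_genImpl _).trans h2)
  have hzA : ¬ z ≤ AL := by
    intro h
    have hb : (⊥ : B) ∈ A := h ((subset_genImpl _) (Set.mem_union_right _ rfl))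
    exact ha0 (le_bot_iff.mp (ha.2 hb))
  -- the set of X with A ≤ X and X ⊔ z = ⊤
  set atomsF : Finset B := Finset.univ.filter (fun e : B => IsAtom e ∧ e ≤ a) with hatomsF
  set IciL : B → ImplLat B := fun e => ⟨Set.Ici e, isImplSublattice_Ici e⟩ with hIciL
  have hQiff : ∀ X : ImplLat B, AL ≤ X →
      (j X = ⊤ ↔ ∀ Y : Set B, IsImplSublattice Y → X.1 ⊆ Y → (⊥ : B) ∈ Y → Y = Set.univ) := by
    intro X hAX
    have hAX' : A ⊆ X.1 := hAX
    constructor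
    · intro h Y hY hXY hbY
      have h1 : X.1 ∪ (A ∪ {⊥}) ⊆ Y := by
        apply Set.union_subset hXY
        apply Set.union_subset (hAX'.trans hXY)
        intro t ht
        rw [Set.mem_singleton_iff.mp ht]
        exact hbY
      have h2 : genImpl (X.1 ∪ (A ∪ {⊥})) ⊆ Y := genImpl_subset hY h1
      have h3 : (j X).1 = Set.univ := congrArg Subtype.val h
      rw [hjdef] at h3
      exact Set.eq_univ_of_univ_subset (h3 ▸ h2)
    · intro h
      apply Subtype.ext
      show genImpl (X.1 ∪ (A ∪ {⊥})) = Set.univ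
      apply h _ (isImplSublattice_genImpl _)
      · exact (Set.subset_union_left).trans (subset_genImpl _)
      · exact (subset_genImpl _) (Set.mem_union_right _ (Set.mem_union_right _ rfl))
  have htopnot : (⊤ : ImplLat B) ∉ atomsF.image IciL := by
    intro h
    obtain ⟨e, hem, heq⟩ := Finset.mem_image.mp h
    simp only [hatomsF, Finset.mem_filter, Finset.mem_univ, true_and] at hem
    have huniv : Set.Ici e = Set.univ := congrArg Subtype.val heq
    have hb : e ≤ (⊥ : B) := by
      have hmem : (⊥ : B) ∈ Set.Ici e := huniv ▸ Set.mem_univ _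
      exact hmem
    exact hem.1.1 (le_bot_iff.mp hb)
  have hmem : ∀ X : ImplLat B, X ∈ insert ⊤ (atomsF.image IciL) ↔ (AL ≤ X ∧ j X = ⊤) := by
    intro X
    simp only [Finset.mem_insert, Finset.mem_image]
    constructor
    · rintro (rfl | ⟨e, hem, rfl⟩)
      · refine ⟨le_top, ?_⟩
        rw [hQiff ⊤ le_top]
        intro Y hY hXY hbY
        exact Set.eq_univ_of_univ_subset hXY
      · simp only [hatomsF, Finset.mem_filter, Finset.mem_univ, true_and] at hem
        obtain ⟨he, hea⟩ := hem
        have hAX : AL ≤ IciL e := fun x hx => hea.trans (ha.2 hx)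
        refine ⟨hAX, ?_⟩
        rw [hQiff (IciL e) hAX]
        exact (classify ha (isImplSublattice_Ici e) hAX).mpr (Or.inr ⟨e, he, hea, rfl⟩)
    · rintro ⟨hAX, hjX⟩
      have hc1 := (hQiff X hAX).mp hjX
      rcases (classify ha X.2 hAX).mp hc1 with h | ⟨e, he, hea, hXe⟩
      · exact Or.inl (Subtype.ext h)
      · refine Or.inr ⟨e, ?_, Subtype.ext hXe.symm⟩
        simp only [hatomsF, Finset.mem_filter, Finset.mem_univ, true_and]
        exact ⟨he, hea⟩
  have hW := weisner_sum AL z hzA j hjspec (insert ⊤ (atomsF.image IciL)) hmem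
  rw [Finset.sum_insert htopnot] at hW
  have hinj : ∀ x ∈ atomsF, ∀ y ∈ atomsF, IciL x = IciL y → x = y := by
    intro x hx y hy hxy
    have h1 : Set.Ici x = Set.Ici y := congrArg Subtype.val hxy
    have h2 : x ≤ y := by
      have : y ∈ Set.Ici x := by rw [h1]; exact Set.mem_Ici.mpr le_rfl
      exact this
    have h3 : y ≤ x := by
      have : x ∈ Set.Ici y := by rw [← h1]; exact Set.mem_Ici.mpr le_rfl
      exact this
    exact le_antisymm h2 h3
  rw [Finset.sum_image hinj] at hW
  have hconst : ∀ e ∈ atomsF, mu ℤ AL (IciL e) = mu ℤ AL (IciL c) := by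
    intro e hem
    simp only [hatomsF, Finset.mem_filter, Finset.mem_univ, true_and] at hem
    exact mu_Ici_symm hA ha hem.1 hc hem.2 hca
  rw [Finset.sum_congr rfl hconst, Finset.sum_const, nsmul_eq_mul] at hW
  have hcard : atomsF.card = natomsBelow a := rfl
  have htop : (⊤ : ImplLat B) = ⟨Set.univ, isImplSublattice_univ⟩ := rfl
  rw [hcard, htop] at hW
  have hfin : mu ℤ AL (⟨Set.univ, isImplSublattice_univ⟩ : ImplLat B) =
      -(natomsBelow a : ℤ) * mu ℤ AL (IciL c) := by linear_combination hW
  exact hfin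
end
end

section
/- Let A be an implication sublattice of B with least element a := min A. The interval [A, B] in the lattice 𝒜 is order-isomorphic to the product P₁ × P₂, where P₁ is the poset (under inclusion) of Boolean subalgebras of the Boolean algebra [a,1] = {x ∈ B : a ≤ x} that contain A, and P₂ is the poset (under inclusion) of implication sublattices of the Boolean algebra [0,a] = {x ∈ B : x ≤ a}. -/
open scoped Classical

noncomputable section

/-- A Boolean subalgebra of the interval Boolean algebra `[a,⊤] = {x : a ≤ x}`:
a subset of `[a,⊤]` containing `a` and `⊤`, closed under `⊔`, `⊓` and the relative
complement `x ↦ xᶜ ⊔ a`. -/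
def IsBoolSubalgebraIci {B : Type*} [BooleanAlgebra B] (a : B) (C : Set B) : Prop :=
  C ⊆ Set.Ici a ∧ a ∈ C ∧ (⊤ : B) ∈ C ∧ (∀ x ∈ C, ∀ y ∈ C, x ⊔ y ∈ C) ∧
    (∀ x ∈ C, ∀ y ∈ C, x ⊓ y ∈ C) ∧ (∀ x ∈ C, xᶜ ⊔ a ∈ C)

/-- An implication sublattice of the interval Boolean algebra `[⊥,a] = {x : x ≤ a}`:
a nonempty subset of `[⊥,a]` closed under the relative implication
`x → y := (xᶜ ⊓ a) ⊔ y` and under `⊓`. -/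
def IsImplSublatticeIic {B : Type*} [BooleanAlgebra B] (a : B) (C : Set B) : Prop :=
  C ⊆ Set.Iic a ∧ C.Nonempty ∧ (∀ x ∈ C, ∀ y ∈ C, (xᶜ ⊓ a) ⊔ y ∈ C) ∧
    (∀ x ∈ C, ∀ y ∈ C, x ⊓ y ∈ C)

section Aux
variable {B : Type*} [BooleanAlgebra B] {A C C₁ C₂ : Set B} {a x y : B}

lemma id0 (z a : B) : (z ⊓ aᶜ) ⊔ a = z ⊔ a := by
  rw [sup_comm, sup_inf_left]
  simp [sup_comm]

lemma id1 (x a : B) : (xᶜ ⊔ a)ᶜ ⊔ a = x ⊔ a := by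
  rw [compl_sup, compl_compl, id0]

lemma id6 (x a : B) : (x ⊔ a) ⊓ (aᶜ ⊔ x ⊓ a) = x := by
  rw [sup_inf_left]
  simp [sup_comm, inf_comm]
  rw [← sup_inf_left]
  simp

lemma id3 (x y a : B) : ((xᶜ ⊔ a) ⊓ (yᶜ ⊔ a))ᶜ ⊔ a = (x ⊔ y) ⊔ a := by
  rw [compl_inf, compl_sup, compl_sup, compl_compl, compl_compl, ← inf_sup_right, id0]

lemma id4 (hy : y ≤ a) : (xᶜ ⊓ a) ⊔ y = (xᶜ ⊔ y) ⊓ a := by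
  rw [sup_comm, sup_inf_left, sup_comm y xᶜ, sup_eq_right.mpr hy]

lemma id5 (hx : x ≤ a) : (xᶜ ⊓ a) ⊔ x = a := by
  rw [sup_comm, sup_inf_left]
  simp [sup_eq_right.mpr hx]

lemma id7 (x y a : B) : (x ⊓ y) ⊔ a = (x ⊔ a) ⊓ (y ⊔ a) := by
  rw [sup_comm, sup_inf_left, sup_comm a x, sup_comm a y]

lemma id8 (x y a : B) : ((x ⊔ a)ᶜ ⊔ a) ⊔ (y ⊔ a) = (xᶜ ⊔ y) ⊔ a := by
  rw [compl_sup, id0, sup_sup_sup_comm, sup_idem]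

lemma id9 (x y a : B) : ((x ⊓ a)ᶜ ⊓ a) ⊔ (y ⊓ a) = (xᶜ ⊔ y) ⊓ a := by
  rw [compl_inf, inf_sup_right, compl_inf_self, sup_bot_eq, ← inf_sup_right]

lemma sup_a_mem (hC : IsImplSublattice C) (haC : a ∈ C) (hx : x ∈ C) : x ⊔ a ∈ C := by
  have h1 := hC.2.1 x hx a haC
  have h2 := hC.2.1 _ h1 a haC
  rwa [id1] at h2

lemma mem_iff_parts (hC : IsImplSublattice C) (haC : a ∈ C) :
    x ∈ C ↔ x ⊔ a ∈ C ∧ x ⊓ a ∈ C := by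
  constructor
  · exact fun hx => ⟨sup_a_mem hC haC hx, hC.2.2 x hx a haC⟩
  · rintro ⟨h1, h2⟩
    have h3 := hC.2.1 a haC _ h2
    have h4 := hC.2.2 _ h1 _ h3
    rwa [id6] at h4

lemma toIci_spec (hC : IsImplSublattice C) (haC : a ∈ C) :
    IsBoolSubalgebraIci a (C ∩ Set.Ici a) := by
  refine ⟨Set.inter_subset_right, ⟨haC, le_refl a⟩, ⟨?_, le_top⟩, ?_, ?_, ?_⟩
  · have := hC.2.1 a haC a haC
    rwa [compl_sup_eq_top] at this
  · rintro x ⟨hx, hax⟩ y ⟨hy, hay⟩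
    have h1 := hC.2.1 x hx a haC
    have h2 := hC.2.1 y hy a haC
    have h3 := hC.2.1 _ (hC.2.2 _ h1 _ h2) a haC
    rw [id3] at h3
    refine ⟨?_, le_trans hax le_sup_left⟩
    rwa [sup_eq_left.mpr (le_trans hax le_sup_left)] at h3
  · rintro x ⟨hx, hax⟩ y ⟨hy, hay⟩
    exact ⟨hC.2.2 x hx y hy, le_inf hax hay⟩
  · rintro x ⟨hx, hax⟩
    exact ⟨hC.2.1 x hx a haC, le_sup_right⟩

lemma toIic_spec (hC : IsImplSublattice C) (haC : a ∈ C) :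
    IsImplSublatticeIic a (C ∩ Set.Iic a) := by
  refine ⟨Set.inter_subset_right, ⟨a, haC, le_refl a⟩, ?_, ?_⟩
  · rintro x ⟨hx, hax⟩ y ⟨hy, hay⟩
    rw [id4 hay]
    exact ⟨hC.2.2 _ (hC.2.1 x hx y hy) a haC, inf_le_right⟩
  · rintro x ⟨hx, hax⟩ y ⟨hy, hay⟩
    exact ⟨hC.2.2 x hx y hy, le_trans inf_le_left hax⟩

lemma a_mem_iic (h : IsImplSublatticeIic a C₂) : a ∈ C₂ := by
  obtain ⟨x, hx⟩ := h.2.1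
  have := h.2.2.1 x hx x hx
  rwa [id5 (h.1 hx)] at this

/-- The inverse construction. -/
def backSet (a : B) (C₁ C₂ : Set B) : Set B := {x | x ⊔ a ∈ C₁ ∧ x ⊓ a ∈ C₂}

lemma back_spec (h1 : IsBoolSubalgebraIci a C₁) (h2 : IsImplSublatticeIic a C₂) :
    IsImplSublattice (backSet a C₁ C₂) := by
  obtain ⟨hsub1, haC1, htop1, hsup1, hinf1, hcmp1⟩ := h1
  have haC₂ : a ∈ C₂ := a_mem_iic h2
  refine ⟨⟨a, by simpa [backSet] using ⟨haC1, haC₂⟩⟩, ?_, ?_⟩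
  · rintro x ⟨hx1, hx2⟩ y ⟨hy1, hy2⟩
    constructor
    · have := hsup1 _ (hcmp1 _ hx1) _ hy1
      rwa [id8] at this
    · have := h2.2.2.1 _ hx2 _ hy2
      rwa [id9] at this
  · rintro x ⟨hx1, hx2⟩ y ⟨hy1, hy2⟩
    constructor
    · rw [id7]
      exact hinf1 _ hx1 _ hy1
    · have := h2.2.2.2 _ hx2 _ hy2
      rwa [inf_inf_inf_comm, inf_idem] at this

lemma back_left_inv (hC : IsImplSublattice C) (haC : a ∈ C) :
    backSet a (C ∩ Set.Ici a) (C ∩ Set.Iic a) = C := by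
  ext x
  rw [mem_iff_parts hC haC (x := x)]
  constructor
  · rintro ⟨⟨h1, _⟩, ⟨h2, _⟩⟩; exact ⟨h1, h2⟩
  · rintro ⟨h1, h2⟩; exact ⟨⟨h1, le_sup_right⟩, ⟨h2, inf_le_right⟩⟩

lemma back_right_inv₁ (h1 : IsBoolSubalgebraIci a C₁) (h2 : IsImplSublatticeIic a C₂) :
    backSet a C₁ C₂ ∩ Set.Ici a = C₁ := by
  ext x
  constructor
  · rintro ⟨⟨hx1, _⟩, hax⟩
    rwa [sup_eq_left.mpr hax] at hx1
  · intro hx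
    have hax : a ≤ x := h1.1 hx
    exact ⟨⟨by rwa [sup_eq_left.mpr hax], by rw [inf_eq_right.mpr hax]; exact a_mem_iic h2⟩, hax⟩

lemma back_right_inv₂ (h1 : IsBoolSubalgebraIci a C₁) (h2 : IsImplSublatticeIic a C₂) :
    backSet a C₁ C₂ ∩ Set.Iic a = C₂ := by
  ext x
  constructor
  · rintro ⟨⟨_, hx2⟩, hax⟩
    rwa [inf_eq_left.mpr hax] at hx2
  · intro hx
    have hax : x ≤ a := h2.1 hx
    exact ⟨⟨by rw [sup_eq_right.mpr hax]; exact h1.2.1, by rwa [inf_eq_left.mpr hax]⟩, hax⟩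

end Aux
/-- Let `A ∈ 𝒜` with least element `a`.  The interval `[A, B]` of `𝒜`
is order-isomorphic to `P₁ × P₂`, where `P₁` is the poset of Boolean subalgebras of
`[a,⊤]` containing `A` and `P₂` is the poset of implication sublattices of `[⊥,a]`. -/
theorem interval_orderIso_prod {B : Type*} [Fintype B] [BooleanAlgebra B] [Nontrivial B]
    (A : Set B) (hA : IsImplSublattice A) (a : B) (ha : IsLeast A a) :
    Nonempty ({C : ImplLat B // A ⊆ C.1} ≃o
      ({C : Set B // IsBoolSubalgebraIci a C ∧ A ⊆ C} ×
        {C : Set B // IsImplSublatticeIic a C})) := by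
  have haA : a ∈ A := ha.1
  refine ⟨{
    toFun := fun C =>
      (⟨C.1.1 ∩ Set.Ici a, toIci_spec C.1.2 (C.2 haA),
          fun x hx => ⟨C.2 hx, ha.2 hx⟩⟩,
        ⟨C.1.1 ∩ Set.Iic a, toIic_spec C.1.2 (C.2 haA)⟩)
    invFun := fun p =>
      ⟨⟨backSet a p.1.1 p.2.1, back_spec p.1.2.1 p.2.2⟩,
        fun x hx => ⟨by rw [sup_eq_left.mpr (ha.2 hx)]; exact p.1.2.2 hx,
          by rw [inf_eq_right.mpr (ha.2 hx)]; exact a_mem_iic p.2.2⟩⟩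
    left_inv := by
      rintro ⟨⟨C, hC⟩, hAC⟩
      exact Subtype.ext (Subtype.ext (back_left_inv hC (hAC haA)))
    right_inv := by
      rintro ⟨⟨C₁, h1, hA1⟩, ⟨C₂, h2⟩⟩
      exact Prod.ext (Subtype.ext (back_right_inv₁ h1 h2)) (Subtype.ext (back_right_inv₂ h1 h2))
    map_rel_iff' := by
      rintro ⟨⟨C, hC⟩, hAC⟩ ⟨⟨D, hD⟩, hAD⟩
      constructor
      · rintro ⟨h1, h2⟩
        intro x hx
        rw [mem_iff_parts hC (hAC haA)] at hx
        rw [show (x ∈ D) = (x ∈ D) from rfl, mem_iff_parts hD (hAD haA)]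
        have e1 : x ⊔ a ∈ D ∩ Set.Ici a := h1 ⟨hx.1, le_sup_right⟩
        have e2 : x ⊓ a ∈ D ∩ Set.Iic a := h2 ⟨hx.2, inf_le_right⟩
        exact ⟨e1.1, e2.1⟩
      · intro h
        exact ⟨fun x hx => ⟨h hx.1, hx.2⟩, fun x hx => ⟨h hx.1, hx.2⟩⟩ }⟩
end
end

section
/- Let C₁ and C₂ be Boolean subalgebras of B, regarded as elements of 𝒜. Then the intervals [{1}, C₁] and [{1}, C₂] in 𝒜 are order-isomorphic if and only if C₁ and C₂ have the same number of atoms (equivalently, are isomorphic as Boolean algebras). -/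
open scoped Classical

noncomputable section

/-- The atoms of a Boolean subalgebra `C` of `B`: the minimal elements of `C \ {⊥}`. -/
def subAtoms {B : Type*} [BooleanAlgebra B] [Fintype B] (C : Set B) : Finset B :=
  Finset.univ.filter fun d : B => d ∈ C ∧ d ≠ ⊥ ∧ ∀ x ∈ C, x ≠ ⊥ → x ≤ d → x = d

set_option linter.unusedSectionVars false
set_option linter.unusedVariables false


namespace IsoUpAux

variable {B : Type*} [Fintype B] [BooleanAlgebra B]

def ratoms (A : Set B) (a₀ : B) : Finset B :=
  Finset.univ.filter fun d : B => d ∈ A ∧ d ≠ a₀ ∧ ∀ x ∈ A, x ≠ a₀ → x ≤ d → x = d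

lemma mem_ratoms {A : Set B} {a₀ d : B} :
    d ∈ ratoms A a₀ ↔ d ∈ A ∧ d ≠ a₀ ∧ ∀ x ∈ A, x ≠ a₀ → x ≤ d → x = d := by
  simp [ratoms]

structure RelAlg (A : Set B) (a₀ : B) : Prop where
  bot_mem : a₀ ∈ A
  bot_le' : ∀ x ∈ A, a₀ ≤ x
  inf_mem : ∀ x ∈ A, ∀ y ∈ A, x ⊓ y ∈ A
  imp_mem : ∀ x ∈ A, ∀ y ∈ A, xᶜ ⊔ y ∈ A

namespace RelAlg

variable {A : Set B} {a₀ : B}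

lemma top_mem (h : RelAlg A a₀) : ⊤ ∈ A := by
  have := h.imp_mem a₀ h.bot_mem a₀ h.bot_mem; simpa using this

lemma sup_mem (h : RelAlg A a₀) : ∀ x ∈ A, ∀ y ∈ A, x ⊔ y ∈ A := by
  intro x hx y hy
  have key : ((xᶜ ⊔ a₀) ⊓ (yᶜ ⊔ a₀))ᶜ ⊔ a₀ = x ⊔ y := by
    have e : ∀ z : B, a₀ ≤ z → z ⊓ a₀ᶜ ⊔ a₀ = z := by
      intro z hz
      rw [sup_inf_right, compl_sup_eq_top, inf_top_eq, sup_eq_left.2 hz]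
    rw [compl_inf, compl_sup, compl_sup, compl_compl, compl_compl,
      sup_sup_distrib_right, e x (h.bot_le' x hx), e y (h.bot_le' y hy)]
  have m : ((xᶜ ⊔ a₀) ⊓ (yᶜ ⊔ a₀))ᶜ ⊔ a₀ ∈ A :=
    h.imp_mem _ (h.inf_mem _ (h.imp_mem x hx a₀ h.bot_mem) _ (h.imp_mem y hy a₀ h.bot_mem))
      _ h.bot_mem
  rwa [key] at m

lemma finsetSup_mem (h : RelAlg A a₀) {s : Finset B} (hs : ∀ y ∈ s, y ∈ A) :
    a₀ ⊔ s.sup id ∈ A := by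
  classical
  induction s using Finset.induction with
  | empty => simpa using h.bot_mem
  | @insert a s hns ih =>
      have : a₀ ⊔ (insert a s).sup id = a ⊔ (a₀ ⊔ s.sup id) := by
        rw [Finset.sup_insert]; simp only [id]; rw [sup_left_comm]
      rw [this]
      exact h.sup_mem _ (hs a (Finset.mem_insert_self a s)) _
        (ih fun y hy => hs y (Finset.mem_insert_of_mem hy))

lemma exists_ratom_le (h : RelAlg A a₀) {x : B} (hx : x ∈ A) (hne : x ≠ a₀) :
    ∃ d ∈ ratoms A a₀, d ≤ x := by
  classical
  set s : Finset B := Finset.univ.filter (fun y => y ∈ A ∧ y ≤ x ∧ y ≠ a₀) with hs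
  have hsne : s.Nonempty := ⟨x, by simp [hs, hx, hne]⟩
  obtain ⟨d, hd, hmin⟩ := s.exists_minimal hsne
  simp only [hs, Finset.mem_filter, Finset.mem_univ, true_and] at hd hmin
  refine ⟨d, mem_ratoms.2 ⟨hd.1, hd.2.2, ?_⟩, hd.2.1⟩
  intro z hz hzne hzd
  by_contra hne'
  exact hne' (le_antisymm hzd (hmin ⟨hz, hzd.trans hd.2.1, hzne⟩ hzd))

lemma ratoms_inf (h : RelAlg A a₀) {d e : B} (hd : d ∈ ratoms A a₀) (he : e ∈ ratoms A a₀)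
    (hne : d ≠ e) : d ⊓ e = a₀ := by
  rcases mem_ratoms.1 hd with ⟨hdA, hdne, hdmin⟩
  rcases mem_ratoms.1 he with ⟨heA, hene, hemin⟩
  by_contra hcon
  have h1 : d ⊓ e = d := hdmin _ (h.inf_mem d hdA e heA) hcon inf_le_left
  have h2 : d ≤ e := by rw [← h1]; exact inf_le_right
  exact hne (hemin d hdA hdne h2)

lemma ratom_dichotomy (h : RelAlg A a₀) {d z : B} (hd : d ∈ ratoms A a₀) (hz : z ∈ A) :
    d ⊓ z = a₀ ∨ d ≤ z := by
  rcases mem_ratoms.1 hd with ⟨hdA, _, hdmin⟩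
  by_cases hc : d ⊓ z = a₀
  · exact Or.inl hc
  · right
    have := hdmin _ (h.inf_mem d hdA z hz) hc inf_le_left
    rw [← this]; exact inf_le_right

/-- Atomic decomposition: every element is the (relative) join of the relative atoms below it. -/
lemma eq_sup_below (h : RelAlg A a₀) {x : B} (hx : x ∈ A) :
    x = a₀ ⊔ ((ratoms A a₀).filter (· ≤ x)).sup id := by
  classical
  set s := a₀ ⊔ ((ratoms A a₀).filter (· ≤ x)).sup id with hsdef
  have hsmem : s ∈ A := h.finsetSup_mem fun y hy => (mem_ratoms.1 (Finset.mem_filter.1 hy).1).1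
  have hsx : s ≤ x := sup_le (h.bot_le' x hx)
    (Finset.sup_le fun y hy => (Finset.mem_filter.1 hy).2)
  refine le_antisymm ?_ hsx
  by_contra hxs
  have hw_mem : (sᶜ ⊔ a₀) ⊓ x ⊔ a₀ ∈ A :=
    h.sup_mem _ (h.inf_mem _ (h.imp_mem s hsmem a₀ h.bot_mem) x hx) a₀ h.bot_mem
  have hw_eq : (sᶜ ⊔ a₀) ⊓ x ⊔ a₀ = x ⊓ sᶜ ⊔ a₀ := by
    rw [inf_sup_right, sup_assoc, inf_comm]
    congr 1
    exact sup_eq_right.2 inf_le_left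
  set w := x ⊓ sᶜ ⊔ a₀ with hwdef
  have hw : w ∈ A := hw_eq ▸ hw_mem
  have ha₀s : a₀ ≤ s := le_sup_left
  have hwne : w ≠ a₀ := by
    intro hcon
    apply hxs
    have h1 : x ⊓ sᶜ ≤ a₀ := le_sup_left.trans hcon.le
    calc x = x ⊓ (s ⊔ sᶜ) := by rw [sup_compl_eq_top, inf_top_eq]
    _ = x ⊓ s ⊔ x ⊓ sᶜ := inf_sup_left x s sᶜ
    _ ≤ s ⊔ a₀ := sup_le_sup inf_le_right h1
    _ = s := sup_eq_left.2 ha₀s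
  obtain ⟨d, hd, hdw⟩ := h.exists_ratom_le hw hwne
  have hdA := (mem_ratoms.1 hd).1
  have hdbot := h.bot_le' d hdA
  have hdnea := (mem_ratoms.1 hd).2.1
  rcases h.ratom_dichotomy hd hx with hdx | hdx
  · -- d ⊓ x = a₀, but d ≤ w = (x ⊓ sᶜ) ⊔ a₀ forces d ≤ a₀
    have : d ≤ a₀ := by
      calc d = d ⊓ (x ⊓ sᶜ ⊔ a₀) := (inf_eq_left.2 hdw).symm
      _ = d ⊓ (x ⊓ sᶜ) ⊔ d ⊓ a₀ := inf_sup_left _ _ _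
      _ ≤ d ⊓ x ⊔ a₀ := sup_le_sup (by gcongr; exact inf_le_left) inf_le_right
      _ = a₀ := by rw [hdx, sup_idem]
    exact hdnea (le_antisymm this hdbot)
  · -- d ≤ x, so d ≤ s, so d ≤ w ⊓ s = a₀
    have hdles : d ≤ s := le_sup_of_le_right
      (Finset.le_sup (f := id) (Finset.mem_filter.2 ⟨hd, hdx⟩))
    have h2 : (x ⊓ sᶜ ⊔ a₀) ⊓ s ≤ a₀ := by
      rw [inf_sup_right]
      apply sup_le _ inf_le_left
      calc x ⊓ sᶜ ⊓ s ≤ sᶜ ⊓ s := by gcongr; exact inf_le_right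
      _ = ⊥ := by rw [inf_comm, inf_compl_eq_bot]
      _ ≤ a₀ := bot_le
    have : d ≤ a₀ := (le_inf hdw hdles).trans h2
    exact hdnea (le_antisymm this hdbot)

/-- A relative atom below a relative join of relative atoms belongs to the set. -/
lemma ratom_le_sup (h : RelAlg A a₀) {S : Finset B} (hS : S ⊆ ratoms A a₀) {d : B}
    (hd : d ∈ ratoms A a₀) (hle : d ≤ a₀ ⊔ S.sup id) : d ∈ S := by
  classical
  by_contra hns
  have h1 : d ⊓ S.sup id ≤ a₀ := by
    rw [Finset.sup_inf_distrib_left]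
    exact Finset.sup_le fun e he => le_of_eq (h.ratoms_inf hd (hS he)
      (fun hde => hns (hde ▸ he)))
  have h2 : d ≤ a₀ := by
    calc d = d ⊓ (a₀ ⊔ S.sup id) := (inf_eq_left.2 hle).symm
    _ = d ⊓ a₀ ⊔ d ⊓ S.sup id := inf_sup_left _ _ _
    _ ≤ a₀ ⊔ a₀ := sup_le_sup inf_le_right h1
    _ = a₀ := sup_idem a₀
  exact (mem_ratoms.1 hd).2.1 (le_antisymm h2 (h.bot_le' d (mem_ratoms.1 hd).1))

/-- The cardinality of a relative Boolean algebra is `2 ^ (number of relative atoms)`. -/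
lemma card_eq (h : RelAlg A a₀) : A.toFinset.card = 2 ^ (ratoms A a₀).card := by
  classical
  rw [← Finset.card_powerset]
  symm
  apply Finset.card_bij (fun S _ => a₀ ⊔ S.sup id)
  · intro S hS
    rw [Set.mem_toFinset]
    exact h.finsetSup_mem fun y hy =>
      (mem_ratoms.1 (Finset.mem_powerset.1 hS hy)).1
  · intro S hS T hT hST
    have key : ∀ S T : Finset B, S ⊆ ratoms A a₀ → T ⊆ ratoms A a₀ →
        a₀ ⊔ S.sup id = a₀ ⊔ T.sup id → S ⊆ T := by
      intro S T hS hT hEq d hd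
      exact h.ratom_le_sup hT (hS hd)
        (hEq ▸ le_sup_of_le_right (Finset.le_sup (f := id) hd))
    exact le_antisymm (key S T (Finset.mem_powerset.1 hS) (Finset.mem_powerset.1 hT) hST)
      (key T S (Finset.mem_powerset.1 hT) (Finset.mem_powerset.1 hS) hST.symm)
  · intro x hx
    refine ⟨(ratoms A a₀).filter (· ≤ x), Finset.mem_powerset.2 (Finset.filter_subset _ _), ?_⟩
    exact (h.eq_sup_below (Set.mem_toFinset.1 hx)).symm

end RelAlg

open RelAlg

variable {B : Type*} [Fintype B] [BooleanAlgebra B]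

/-- A Boolean subalgebra is a relative Boolean algebra with bottom `⊥`. -/
lemma boolRelAlg {C : Set B} (hC : IsBoolSubalgebra C) : RelAlg C ⊥ :=
  ⟨hC.1, fun _ _ => bot_le, hC.2.2.2.1,
    fun x hx y hy => hC.2.2.1 _ (hC.2.2.2.2 x hx) y hy⟩

lemma ratoms_bot_eq_subAtoms (C : Set B) : ratoms C ⊥ = subAtoms C := rfl

lemma implTopMem {A : Set B} (hA : IsImplSublattice A) : ⊤ ∈ A := by
  obtain ⟨x, hx⟩ := hA.1
  have := hA.2.1 x hx x hx
  simpa using this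

/-- An implication sublattice is a relative Boolean algebra over its least element. -/
lemma implRelAlg {A : Set B} (hA : IsImplSublattice A) :
    ∃ a₀ : B, RelAlg A a₀ := by
  classical
  have hne : A.toFinset.Nonempty := by
    rw [Set.toFinset_nonempty]; exact hA.1
  refine ⟨A.toFinset.inf' hne id, ?_, ?_, hA.2.2, hA.2.1⟩
  · exact Finset.inf'_mem A hA.2.2 _ hne id (fun i hi => Set.mem_toFinset.1 hi)
  · intro x hx
    exact Finset.inf'_le id (Set.mem_toFinset.2 hx)

/-- The cardinality of an implication sublattice is a power of two. -/
lemma implCardPow {A : Set B} (hA : IsImplSublattice A) :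
    ∃ k : ℕ, A.toFinset.card = 2 ^ k := by
  obtain ⟨a₀, h⟩ := implRelAlg hA
  exact ⟨_, h.card_eq⟩

/-- The cardinality of a Boolean subalgebra is `2 ^ (number of atoms)`. -/
lemma boolCard {C : Set B} (hC : IsBoolSubalgebra C) :
    C.toFinset.card = 2 ^ (subAtoms C).card := by
  have := (boolRelAlg hC).card_eq
  rwa [ratoms_bot_eq_subAtoms] at this

/-- Any strict chain in the interval `[{⊤}, C]` has length at most the number of atoms. -/
lemma chain_bound {C : Set B} (hC : IsBoolSubalgebra C) {m : ℕ}
    (g : Fin (m+1) → {A : ImplLat B // {(⊤:B)} ⊆ A.1 ∧ A.1 ⊆ C}) (hg : StrictMono g) :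
    m ≤ (subAtoms C).card := by
  classical
  set n := (subAtoms C).card with hn
  have hk : ∀ i, ∃ k, ((g i).1.1.toFinset).card = 2 ^ k := fun i => implCardPow (g i).1.2
  choose k hk using hk
  have hcard : ∀ i j, i < j → ((g i).1.1.toFinset).card < ((g j).1.1.toFinset).card := by
    intro i j hij
    apply Finset.card_lt_card
    rw [Set.toFinset_ssubset_toFinset]
    exact hg hij
  have hkmono : StrictMono k := by
    intro i j hij
    have := hcard i j hij
    rw [hk i, hk j] at this
    exact (Nat.pow_lt_pow_iff_right (by norm_num)).1 this
  have hkle : ∀ i, k i ≤ n := by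
    intro i
    have h1 : ((g i).1.1.toFinset).card ≤ C.toFinset.card := by
      apply Finset.card_le_card
      rw [Set.toFinset_subset_toFinset]
      exact (g i).2.2
    rw [hk i, boolCard hC, ← hn] at h1
    exact (Nat.pow_le_pow_iff_right (by norm_num)).1 h1
  have hinj : Function.Injective (fun i : Fin (m+1) => (⟨k i, Nat.lt_succ_of_le (hkle i)⟩ : Fin (n+1))) := by
    intro i j hij
    simp only [Fin.mk.injEq] at hij
    exact hkmono.injective hij
  have := Fintype.card_le_of_injective _ hinj
  simpa using this

/-- There is a strict chain of length `(subAtoms C).card + 1` in the interval `[{⊤}, C]`. -/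
lemma chain_exists {C : Set B} (hC : IsBoolSubalgebra C) :
    ∃ g : Fin ((subAtoms C).card + 1) → {A : ImplLat B // {(⊤:B)} ⊆ A.1 ∧ A.1 ⊆ C},
      StrictMono g := by
  classical
  have hrel := boolRelAlg hC
  set n := (subAtoms C).card with hn
  set σ : Fin n ≃ {x // x ∈ subAtoms C} := ((subAtoms C).equivFin.trans (finCongr hn.symm)).symm
    with hσ
  set T : Fin (n+1) → Finset B := fun i =>
    (Finset.univ.filter fun j : Fin n => (i:ℕ) ≤ (j:ℕ)).image (fun j => ((σ j : B))) with hT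
  have hTsub : ∀ i, T i ⊆ subAtoms C := by
    intro i d hd
    rw [hT] at hd
    obtain ⟨j, _, rfl⟩ := Finset.mem_image.1 hd
    exact (σ j).2
  set c : Fin (n+1) → B := fun i => (T i).sup id with hc
  have hcC : ∀ i, c i ∈ C := by
    intro i
    have := hrel.finsetSup_mem (s := T i) (fun y hy => by
      have := hTsub i hy
      simp only [subAtoms, Finset.mem_filter] at this
      exact this.2.1)
    rwa [bot_sup_eq] at this
  have hcmono : ∀ i i' : Fin (n+1), i ≤ i' → c i' ≤ c i := by
    intro i i' hii
    apply Finset.sup_mono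
    apply Finset.image_subset_image
    intro j hj
    simp only [Finset.mem_filter, Finset.mem_univ, true_and] at hj ⊢
    exact le_trans hii hj
  set A : Fin (n+1) → Set B := fun i => {x ∈ C | c i ≤ x} with hA
  have hAimpl : ∀ i, IsImplSublattice (A i) := by
    intro i
    refine ⟨⟨⊤, hC.2.1, le_top⟩, ?_, ?_⟩
    · rintro x ⟨hx, hcx⟩ y ⟨hy, hcy⟩
      exact ⟨hrel.imp_mem x hx y hy, hcy.trans le_sup_right⟩
    · rintro x ⟨hx, hcx⟩ y ⟨hy, hcy⟩
      exact ⟨hC.2.2.2.1 x hx y hy, le_inf hcx hcy⟩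
  have hAmono : ∀ i i' : Fin (n+1), i ≤ i' → A i ⊆ A i' := by
    intro i i' hii x hx
    exact ⟨hx.1, (hcmono i i' hii).trans hx.2⟩
  have hAne : ∀ i i' : Fin (n+1), i < i' → A i ≠ A i' := by
    intro i i' hii hEq
    have hmem : c i' ∈ A i' := ⟨hcC i', le_rfl⟩
    rw [← hEq] at hmem
    have hcii : c i ≤ c i' := hmem.2
    have hilt : (i:ℕ) < n := lt_of_lt_of_le hii (Nat.lt_succ_iff.1 i'.2)
    set j₀ : Fin n := ⟨(i:ℕ), hilt⟩ with hj₀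
    set d : B := (σ j₀ : B) with hd
    have hdTi : d ∈ T i := by
      rw [hT]
      exact Finset.mem_image.2 ⟨j₀, by simp [hj₀], rfl⟩
    have hdle : d ≤ ⊥ ⊔ (T i').sup id := by
      rw [bot_sup_eq]
      exact (Finset.le_sup (f := id) hdTi).trans hcii
    have hdatom : d ∈ ratoms C ⊥ := by rw [ratoms_bot_eq_subAtoms]; exact (σ j₀).2
    have hdTi' : d ∈ T i' := hrel.ratom_le_sup (by rw [ratoms_bot_eq_subAtoms]; exact hTsub i')
      hdatom hdle
    rw [hT] at hdTi'
    obtain ⟨j, hj, hjd⟩ := Finset.mem_image.1 hdTi'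
    simp only [Finset.mem_filter, Finset.mem_univ, true_and] at hj
    have : j = j₀ := by
      apply σ.injective
      exact Subtype.ext hjd
    rw [this] at hj
    simp only [hj₀] at hj
    omega
  refine ⟨fun i => ⟨⟨A i, hAimpl i⟩, ?_, fun x hx => hx.1⟩, ?_⟩
  · intro x hx
    simp only [Set.mem_singleton_iff] at hx
    subst hx
    exact ⟨hC.2.1, le_top⟩
  · intro i i' hii
    refine lt_of_le_of_ne ?_ ?_
    · exact hAmono i i' hii.le
    · intro hEq
      apply hAne i i' hii
      have := congrArg (fun z => z.1.1) hEq
      exact this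

lemma mem_subAtoms {C : Set B} {d : B} :
    d ∈ subAtoms C ↔ d ∈ C ∧ d ≠ ⊥ ∧ ∀ x ∈ C, x ≠ ⊥ → x ≤ d → x = d := by
  simp [subAtoms]

lemma subAtoms_mem_C {C : Set B} {d : B} (hd : d ∈ subAtoms C) : d ∈ C :=
  (mem_subAtoms.1 hd).1

lemma subAtoms_ne_bot {C : Set B} {d : B} (hd : d ∈ subAtoms C) : d ≠ ⊥ :=
  (mem_subAtoms.1 hd).2.1

lemma bool_eq_sup {C : Set B} (hC : IsBoolSubalgebra C) {x : B} (hx : x ∈ C) :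
    x = ((subAtoms C).filter (· ≤ x)).sup id := by
  have := (boolRelAlg hC).eq_sup_below hx
  rwa [ratoms_bot_eq_subAtoms, bot_sup_eq] at this

lemma bool_atom_le_sup {C : Set B} (hC : IsBoolSubalgebra C) {S : Finset B}
    (hS : S ⊆ subAtoms C) {d : B} (hd : d ∈ subAtoms C) (hle : d ≤ S.sup id) : d ∈ S := by
  apply (boolRelAlg hC).ratom_le_sup (by rwa [ratoms_bot_eq_subAtoms])
    (by rwa [ratoms_bot_eq_subAtoms])
  rwa [bot_sup_eq]

lemma bool_atoms_inf {C : Set B} (hC : IsBoolSubalgebra C) {d e : B} (hd : d ∈ subAtoms C)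
    (he : e ∈ subAtoms C) (hne : d ≠ e) : d ⊓ e = ⊥ :=
  (boolRelAlg hC).ratoms_inf (by rwa [ratoms_bot_eq_subAtoms])
    (by rwa [ratoms_bot_eq_subAtoms]) hne

lemma bool_atom_dichotomy {C : Set B} (hC : IsBoolSubalgebra C) {d z : B}
    (hd : d ∈ subAtoms C) (hz : z ∈ C) : d ⊓ z = ⊥ ∨ d ≤ z :=
  (boolRelAlg hC).ratom_dichotomy (by rwa [ratoms_bot_eq_subAtoms]) hz

lemma bool_atom_prime {C : Set B} (hC : IsBoolSubalgebra C) {d x y : B}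
    (hd : d ∈ subAtoms C) (hx : x ∈ C) (hy : y ∈ C) (hle : d ≤ x ⊔ y) : d ≤ x ∨ d ≤ y := by
  rcases bool_atom_dichotomy hC hd hx with h1 | h1
  · rcases bool_atom_dichotomy hC hd hy with h2 | h2
    · exfalso
      apply subAtoms_ne_bot hd
      calc d = d ⊓ (x ⊔ y) := (inf_eq_left.2 hle).symm
      _ = d ⊓ x ⊔ d ⊓ y := inf_sup_left _ _ _
      _ = ⊥ := by rw [h1, h2, sup_idem]
    · exact Or.inr h2
  · exact Or.inl h1

lemma bool_atom_compl {C : Set B} (hC : IsBoolSubalgebra C) {d x : B}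
    (hd : d ∈ subAtoms C) (hx : x ∈ C) : d ≤ xᶜ ↔ ¬ d ≤ x := by
  constructor
  · intro h1 h2
    apply subAtoms_ne_bot hd
    have : d ≤ x ⊓ xᶜ := le_inf h2 h1
    rwa [inf_compl_eq_bot, le_bot_iff] at this
  · intro h1
    rcases bool_atom_dichotomy hC hd hx with h2 | h2
    · calc d = d ⊓ (x ⊔ xᶜ) := by rw [sup_compl_eq_top, inf_top_eq]
      _ = d ⊓ x ⊔ d ⊓ xᶜ := inf_sup_left _ _ _
      _ = d ⊓ xᶜ := by rw [h2, bot_sup_eq]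
      _ ≤ xᶜ := inf_le_right
    · exact absurd h2 h1

lemma bool_sup_mem {C : Set B} (hC : IsBoolSubalgebra C) {S : Finset B} {f : B → B}
    (hS : ∀ y ∈ S, f y ∈ C) : S.sup f ∈ C := by
  classical
  have h1 : S.sup f = (S.image f).sup id := by rw [Finset.sup_image]; rfl
  have := (boolRelAlg hC).finsetSup_mem (s := S.image f) (fun y hy => by
    obtain ⟨z, hz, rfl⟩ := Finset.mem_image.1 hy
    exact hS z hz)
  rw [bot_sup_eq] at this
  rwa [h1]

/-- A bijection between the atoms of two Boolean subalgebras, given by a pair of mutually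
inverse maps. -/
structure AtomBij (C D : Set B) (τ τ' : B → B) : Prop where
  mapsTo : ∀ d ∈ subAtoms C, τ d ∈ subAtoms D
  mapsTo' : ∀ e ∈ subAtoms D, τ' e ∈ subAtoms C
  left : ∀ d ∈ subAtoms C, τ' (τ d) = d
  right : ∀ e ∈ subAtoms D, τ (τ' e) = e

lemma AtomBij.symm {C D : Set B} {τ τ' : B → B} (h : AtomBij C D τ τ') : AtomBij D C τ' τ :=
  ⟨h.mapsTo', h.mapsTo, h.right, h.left⟩

/-- The map induced on `B` by a bijection of atoms. -/
def mapF (C : Set B) (τ : B → B) (x : B) : B := ((subAtoms C).filter (· ≤ x)).sup τ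

variable {C D : Set B} {τ τ' : B → B}

lemma mapF_mem (hD : IsBoolSubalgebra D) (hb : AtomBij C D τ τ') (x : B) : mapF C τ x ∈ D :=
  bool_sup_mem hD fun d hd => subAtoms_mem_C (hb.mapsTo d (Finset.mem_filter.1 hd).1)

lemma mapF_mono {x y : B} (hxy : x ≤ y) : mapF C τ x ≤ mapF C τ y := by
  apply Finset.sup_le
  intro d hd
  rcases Finset.mem_filter.1 hd with ⟨hd1, hd2⟩
  exact Finset.le_sup (Finset.mem_filter.2 ⟨hd1, hd2.trans hxy⟩)

lemma le_mapF_iff (hC : IsBoolSubalgebra C) (hD : IsBoolSubalgebra D) (hb : AtomBij C D τ τ')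
    {e x : B} (he : e ∈ subAtoms D) (hx : x ∈ C) :
    e ≤ mapF C τ x ↔ τ' e ≤ x := by
  classical
  constructor
  · intro h1
    have h2 : mapF C τ x = (((subAtoms C).filter (· ≤ x)).image τ).sup id := by
      rw [Finset.sup_image]; rfl
    rw [h2] at h1
    have h3 : e ∈ ((subAtoms C).filter (· ≤ x)).image τ := by
      apply bool_atom_le_sup hD _ he h1
      intro y hy
      obtain ⟨d, hd, rfl⟩ := Finset.mem_image.1 hy
      exact hb.mapsTo d (Finset.mem_filter.1 hd).1
    obtain ⟨d, hd, rfl⟩ := Finset.mem_image.1 h3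
    rw [hb.left d (Finset.mem_filter.1 hd).1]
    exact (Finset.mem_filter.1 hd).2
  · intro h1
    have h2 : τ' e ∈ (subAtoms C).filter (· ≤ x) :=
      Finset.mem_filter.2 ⟨hb.mapsTo' e he, h1⟩
    have := Finset.le_sup (f := τ) h2
    rwa [hb.right e he] at this

lemma mapF_mapF (hC : IsBoolSubalgebra C) (hD : IsBoolSubalgebra D) (hb : AtomBij C D τ τ')
    {x : B} (hx : x ∈ C) : mapF D τ' (mapF C τ x) = x := by
  classical
  apply le_antisymm
  · apply Finset.sup_le
    intro e he
    rcases Finset.mem_filter.1 he with ⟨he1, he2⟩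
    exact (le_mapF_iff hC hD hb he1 hx).1 he2
  · conv_lhs => rw [bool_eq_sup hC hx]
    apply Finset.sup_le
    intro d hd
    rcases Finset.mem_filter.1 hd with ⟨hd1, hd2⟩
    have h1 : τ d ≤ mapF C τ x := Finset.le_sup (f := τ) (Finset.mem_filter.2 ⟨hd1, hd2⟩)
    have h2 : τ d ∈ (subAtoms D).filter (· ≤ mapF C τ x) :=
      Finset.mem_filter.2 ⟨hb.mapsTo d hd1, h1⟩
    have := Finset.le_sup (f := τ') h2
    rw [hb.left d hd1] at this
    exact le_trans (le_of_eq rfl) this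

lemma mapF_inf (hC : IsBoolSubalgebra C) (hD : IsBoolSubalgebra D) (hb : AtomBij C D τ τ')
    {x y : B} (hx : x ∈ C) (hy : y ∈ C) :
    mapF C τ (x ⊓ y) = mapF C τ x ⊓ mapF C τ y := by
  classical
  refine le_antisymm (le_inf (mapF_mono inf_le_left) (mapF_mono inf_le_right)) ?_
  unfold mapF
  rw [Finset.sup_inf_distrib_right]
  apply Finset.sup_le
  intro d hd
  rcases Finset.mem_filter.1 hd with ⟨hd1, hd2⟩
  rw [Finset.sup_inf_distrib_left]
  apply Finset.sup_le
  intro d' hd'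
  rcases Finset.mem_filter.1 hd' with ⟨hd'1, hd'2⟩
  by_cases hdd : d = d'
  · subst hdd
    rw [inf_idem]
    exact Finset.le_sup (f := τ) (Finset.mem_filter.2 ⟨hd1, le_inf hd2 hd'2⟩)
  · have : τ d ≠ τ d' := by
      intro hcon
      apply hdd
      rw [← hb.left d hd1, ← hb.left d' hd'1, hcon]
    rw [bool_atoms_inf hD (hb.mapsTo d hd1) (hb.mapsTo d' hd'1) this]
    exact bot_le

lemma mapF_sup (hC : IsBoolSubalgebra C) (hD : IsBoolSubalgebra D) (hb : AtomBij C D τ τ')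
    {x y : B} (hx : x ∈ C) (hy : y ∈ C) :
    mapF C τ (x ⊔ y) = mapF C τ x ⊔ mapF C τ y := by
  classical
  unfold mapF
  have : (subAtoms C).filter (· ≤ x ⊔ y) =
      (subAtoms C).filter (· ≤ x) ∪ (subAtoms C).filter (· ≤ y) := by
    ext d
    simp only [Finset.mem_filter, Finset.mem_union]
    constructor
    · rintro ⟨hd, hle⟩
      rcases bool_atom_prime hC hd hx hy hle with h | h
      · exact Or.inl ⟨hd, h⟩
      · exact Or.inr ⟨hd, h⟩
    · rintro (⟨hd, hle⟩ | ⟨hd, hle⟩)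
      · exact ⟨hd, hle.trans le_sup_left⟩
      · exact ⟨hd, hle.trans le_sup_right⟩
  rw [this, Finset.sup_union]

lemma mapF_bot (hC : IsBoolSubalgebra C) : mapF C τ ⊥ = ⊥ := by
  classical
  unfold mapF
  have : (subAtoms C).filter (· ≤ (⊥:B)) = ∅ := by
    apply Finset.filter_false_of_mem
    intro d hd hcon
    exact subAtoms_ne_bot hd (le_bot_iff.1 hcon)
  rw [this, Finset.sup_empty]

lemma mapF_top (hC : IsBoolSubalgebra C) (hD : IsBoolSubalgebra D) (hb : AtomBij C D τ τ') :
    mapF C τ ⊤ = ⊤ := by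
  classical
  apply top_unique
  have h1 : (⊤:B) = ((subAtoms D).filter (· ≤ (⊤:B))).sup id := bool_eq_sup hD hD.2.1
  conv_lhs => rw [h1]
  apply Finset.sup_le
  intro e he
  rcases Finset.mem_filter.1 he with ⟨he1, _⟩
  have : τ' e ∈ (subAtoms C).filter (· ≤ (⊤:B)) :=
    Finset.mem_filter.2 ⟨hb.mapsTo' e he1, le_top⟩
  have h2 := Finset.le_sup (f := τ) this
  rwa [hb.right e he1] at h2

lemma mapF_compl (hC : IsBoolSubalgebra C) (hD : IsBoolSubalgebra D) (hb : AtomBij C D τ τ')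
    {x : B} (hx : x ∈ C) : mapF C τ xᶜ = (mapF C τ x)ᶜ := by
  have hxc : xᶜ ∈ C := hC.2.2.2.2 x hx
  have hsup : mapF C τ xᶜ ⊔ mapF C τ x = ⊤ := by
    rw [← mapF_sup hC hD hb hxc hx, compl_sup_eq_top, mapF_top hC hD hb]
  have hinf : mapF C τ xᶜ ⊓ mapF C τ x = ⊥ := by
    rw [← mapF_inf hC hD hb hxc hx, compl_inf_eq_bot, mapF_bot hC]
  have : IsCompl (mapF C τ x) (mapF C τ xᶜ) :=
    IsCompl.of_eq (by rwa [inf_comm] at hinf) (by rwa [sup_comm] at hsup)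
  exact this.compl_eq.symm

lemma mapF_imp (hC : IsBoolSubalgebra C) (hD : IsBoolSubalgebra D) (hb : AtomBij C D τ τ')
    {x y : B} (hx : x ∈ C) (hy : y ∈ C) :
    mapF C τ (xᶜ ⊔ y) = (mapF C τ x)ᶜ ⊔ mapF C τ y := by
  rw [mapF_sup hC hD hb (hC.2.2.2.2 x hx) hy, mapF_compl hC hD hb hx]

lemma image_prop (hC : IsBoolSubalgebra C) (hD : IsBoolSubalgebra D) (hb : AtomBij C D τ τ')
    (A : ImplLat B) (hsub : A.1 ⊆ C) :
    IsImplSublattice (mapF C τ '' A.1) ∧ {(⊤:B)} ⊆ mapF C τ '' A.1 ∧ mapF C τ '' A.1 ⊆ D := by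
  refine ⟨⟨A.2.1.image _, ?_, ?_⟩, ?_, ?_⟩
  · rintro u ⟨x, hx, rfl⟩ v ⟨y, hy, rfl⟩
    refine ⟨xᶜ ⊔ y, A.2.2.1 x hx y hy, ?_⟩
    exact mapF_imp hC hD hb (hsub hx) (hsub hy)
  · rintro u ⟨x, hx, rfl⟩ v ⟨y, hy, rfl⟩
    refine ⟨x ⊓ y, A.2.2.2 x hx y hy, ?_⟩
    exact mapF_inf hC hD hb (hsub hx) (hsub hy)
  · intro t ht
    simp only [Set.mem_singleton_iff] at ht
    subst ht
    exact ⟨⊤, implTopMem A.2, mapF_top hC hD hb⟩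
  · rintro u ⟨x, hx, rfl⟩
    exact mapF_mem hD hb x

lemma interval_iso (hC : IsBoolSubalgebra C) (hD : IsBoolSubalgebra D)
    (hb : AtomBij C D τ τ') :
    Nonempty ({A : ImplLat B // {(⊤:B)} ⊆ A.1 ∧ A.1 ⊆ C} ≃o
      {A : ImplLat B // {(⊤:B)} ⊆ A.1 ∧ A.1 ⊆ D}) := by
  have hb' := hb.symm
  have key : ∀ (A : Set B), A ⊆ C → mapF D τ' '' (mapF C τ '' A) = A := by
    intro A hA
    rw [Set.image_image]
    ext y
    constructor
    · rintro ⟨x, hx, rfl⟩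
      simpa [mapF_mapF hC hD hb (hA hx)] using hx
    · intro hy
      exact ⟨y, hy, mapF_mapF hC hD hb (hA hy)⟩

  refine ⟨Equiv.toOrderIso
    { toFun := fun A => ⟨⟨mapF C τ '' A.1.1, (image_prop hC hD hb A.1 A.2.2).1⟩,
        (image_prop hC hD hb A.1 A.2.2).2⟩
      invFun := fun A => ⟨⟨mapF D τ' '' A.1.1, (image_prop hD hC hb' A.1 A.2.2).1⟩,
        (image_prop hD hC hb' A.1 A.2.2).2⟩
      left_inv := ?_
      right_inv := ?_ } ?_ ?_⟩
  · intro A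
    apply Subtype.ext
    apply Subtype.ext
    show mapF D τ' '' (mapF C τ '' A.1.1) = A.1.1
    exact key A.1.1 A.2.2
  · intro A
    apply Subtype.ext
    apply Subtype.ext
    show mapF C τ '' (mapF D τ' '' A.1.1) = A.1.1
    rw [Set.image_image]
    ext y
    constructor
    · rintro ⟨x, hx, rfl⟩
      simpa [mapF_mapF hD hC hb' (A.2.2 hx)] using hx
    · intro hy
      exact ⟨y, hy, mapF_mapF hD hC hb' (A.2.2 hy)⟩
  · intro A A' hAA
    exact Set.image_mono hAA
  · intro A A' hAA
    exact Set.image_mono hAA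

end IsoUpAux

/-- Lemma `lem:isoUp`.  Let `C₁, C₂` be Boolean subalgebras of `B`.
The intervals `[{⊤}, C₁]` and `[{⊤}, C₂]` of `𝒜` are order-isomorphic iff `C₁` and `C₂`
have the same number of atoms (equivalently, are isomorphic Boolean algebras). -/
theorem interval_orderIso_iff_card_atoms_eq {B : Type*} [Fintype B] [BooleanAlgebra B]
    [Nontrivial B] (C₁ C₂ : Set B) (h₁ : IsBoolSubalgebra C₁) (h₂ : IsBoolSubalgebra C₂) :
    Nonempty ({C : ImplLat B // {(⊤ : B)} ⊆ C.1 ∧ C.1 ⊆ C₁} ≃o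
        {C : ImplLat B // {(⊤ : B)} ⊆ C.1 ∧ C.1 ⊆ C₂}) ↔
      (subAtoms C₁).card = (subAtoms C₂).card := by
  classical
  constructor
  · rintro ⟨e⟩
    apply le_antisymm
    · obtain ⟨g, hg⟩ := IsoUpAux.chain_exists h₁
      exact IsoUpAux.chain_bound h₂ (fun i => e (g i)) (e.strictMono.comp hg)
    · obtain ⟨g, hg⟩ := IsoUpAux.chain_exists h₂
      exact IsoUpAux.chain_bound h₁ (fun i => e.symm (g i)) (e.symm.strictMono.comp hg)
  · intro hcard
    set σ : {x // x ∈ subAtoms C₁} ≃ {x // x ∈ subAtoms C₂} :=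
      (subAtoms C₁).equivFin.trans ((finCongr hcard).trans (subAtoms C₂).equivFin.symm) with hσ
    set τ : B → B := fun d => if h : d ∈ subAtoms C₁ then (σ ⟨d, h⟩ : B) else ⊥ with hτ
    set τ' : B → B := fun e => if h : e ∈ subAtoms C₂ then (σ.symm ⟨e, h⟩ : B) else ⊥ with hτ'
    have hb : IsoUpAux.AtomBij C₁ C₂ τ τ' := by
      constructor
      · intro d hd
        rw [hτ]
        simp only [dif_pos hd]
        exact (σ ⟨d, hd⟩).2
      · intro e he
        rw [hτ']
        simp only [dif_pos he]
        exact (σ.symm ⟨e, he⟩).2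
      · intro d hd
        rw [hτ, hτ']
        simp only [dif_pos hd]
        have h2 : ((σ ⟨d, hd⟩ : {x // x ∈ subAtoms C₂}) : B) ∈ subAtoms C₂ := (σ ⟨d, hd⟩).2
        rw [dif_pos h2]
        have h3 : (⟨((σ ⟨d, hd⟩ : {x // x ∈ subAtoms C₂}) : B), h2⟩ :
            {x // x ∈ subAtoms C₂}) = σ ⟨d, hd⟩ := rfl
        rw [h3, Equiv.symm_apply_apply]
      · intro e he
        rw [hτ, hτ']
        simp only [dif_pos he]
        have h2 : ((σ.symm ⟨e, he⟩ : {x // x ∈ subAtoms C₁}) : B) ∈ subAtoms C₁ :=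
          (σ.symm ⟨e, he⟩).2
        rw [dif_pos h2]
        have h3 : (⟨((σ.symm ⟨e, he⟩ : {x // x ∈ subAtoms C₁}) : B), h2⟩ :
            {x // x ∈ subAtoms C₁}) = σ.symm ⟨e, he⟩ := rfl
        rw [h3, Equiv.apply_symm_apply]
    exact IsoUpAux.interval_iso h₁ h₂ hb
end
end

section
/- Let B have n atoms and let 1 ≤ k ≤ n. The number of Boolean subalgebras of B having exactly k atoms equals S(n,k), the Stirling number of the second kind. -/
open scoped Classical

noncomputable section

/-- `S(n, k)`, the Stirling number of the second kind: the number of set partitions of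
`Fin n` into exactly `k` nonempty blocks. -/
def stirling (n k : ℕ) : ℕ :=
  Nat.card {P : Finpartition (Finset.univ : Finset (Fin n)) // P.parts.card = k}

set_option linter.unusedSectionVars false
namespace BSA

open Finset

variable {B : Type*} [Fintype B] [BooleanAlgebra B]

def atomFinset (B : Type*) [Fintype B] [BooleanAlgebra B] : Finset B :=
  Finset.univ.filter fun c : B => IsAtom c

lemma mem_atomFinset {a : B} : a ∈ atomFinset B ↔ IsAtom a := by
  simp [atomFinset]

lemma atom_inf_atom {a b : B} (ha : IsAtom a) (hb : IsAtom b) (hab : a ≠ b) : a ⊓ b = ⊥ := by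
  rcases ha.le_iff.mp (inf_le_left : a ⊓ b ≤ a) with h | h
  · exact h
  · have : a ≤ b := h ▸ inf_le_right
    exact absurd ((hb.le_iff.mp this).resolve_left ha.1) hab

lemma le_of_inf_compl_eq_bot {x y : B} (h : x ⊓ yᶜ = ⊥) : x ≤ y := by
  rw [← sdiff_eq] at h
  exact sdiff_eq_bot_iff.mp h

lemma exists_atom_le {x : B} (hx : x ≠ ⊥) : ∃ a : B, IsAtom a ∧ a ≤ x :=
  (IsAtomic.eq_bot_or_exists_atom_le x).resolve_left hx

lemma eq_sup_atoms (x : B) : ((atomFinset B).filter (· ≤ x)).sup id = x := by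
  set s := ((atomFinset B).filter (· ≤ x)).sup id with hs
  have h1 : s ≤ x := Finset.sup_le fun a ha => (mem_filter.mp ha).2
  refine le_antisymm h1 ?_
  apply le_of_inf_compl_eq_bot
  by_contra h
  obtain ⟨a, haat, hale⟩ := exists_atom_le h
  have hax : a ≤ x := hale.trans inf_le_left
  have has : a ≤ s := Finset.le_sup (f := id) (mem_filter.mpr ⟨mem_atomFinset.mpr haat, hax⟩)
  have hasc : a ≤ sᶜ := hale.trans inf_le_right
  exact haat.1 (le_bot_iff.mp ((le_inf has hasc).trans_eq inf_compl_eq_bot))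

lemma atom_le_sup {S : Finset B} {a : B} (ha : IsAtom a) (h : a ≤ S.sup id) :
    ∃ d ∈ S, a ≤ d := by
  classical
  induction S using Finset.induction_on with
  | empty => simp at h; exact absurd h ha.1
  | @insert d S hd ih =>
    rw [Finset.sup_insert] at h
    have : a = (a ⊓ d) ⊔ (a ⊓ S.sup id) := by
      rw [← inf_sup_left]; exact (inf_eq_left.mpr h).symm
    rcases ha.le_iff.mp (inf_le_left : a ⊓ d ≤ a) with h1 | h1
    · rcases ha.le_iff.mp (inf_le_left : a ⊓ S.sup id ≤ a) with h2 | h2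
      · rw [h1, h2] at this; simp at this; exact absurd this ha.1
      · obtain ⟨e, he, hae⟩ := ih (inf_eq_left.mp h2)
        exact ⟨e, Finset.mem_insert_of_mem he, hae⟩
    · exact ⟨d, Finset.mem_insert_self _ _, inf_eq_left.mp h1⟩

end BSA

namespace BSA
open Finset
set_option linter.unusedSectionVars false

variable {B : Type*} [Fintype B] [BooleanAlgebra B]

lemma mem_subAtoms {C : Set B} {d : B} :
    d ∈ subAtoms C ↔ d ∈ C ∧ d ≠ ⊥ ∧ ∀ x ∈ C, x ≠ ⊥ → x ≤ d → x = d := by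
  simp [subAtoms]

section Sub
variable {C : Set B} (hC : IsBoolSubalgebra C)

lemma sup_mem (hC : IsBoolSubalgebra C) {S : Finset B} (hS : ∀ x ∈ S, x ∈ C) :
    S.sup id ∈ C := by
  classical
  induction S using Finset.induction_on with
  | empty => simpa using hC.1
  | @insert d S hd ih =>
    rw [Finset.sup_insert]
    exact hC.2.2.1 d (hS d (mem_insert_self _ _)) _
      (ih fun x hx => hS x (mem_insert_of_mem hx))

lemma exists_subAtom_le (hC : IsBoolSubalgebra C) {x : B} (hx : x ∈ C) (hx0 : x ≠ ⊥) :
    ∃ d ∈ subAtoms C, d ≤ x := by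
  classical
  have hne : (Finset.univ.filter fun y : B => y ∈ C ∧ y ≠ ⊥ ∧ y ≤ x).Nonempty :=
    ⟨x, by simp [hx, hx0]⟩
  obtain ⟨d, hd, hmin⟩ : ∃ d ∈ (Finset.univ.filter fun y : B => y ∈ C ∧ y ≠ ⊥ ∧ y ≤ x),
      ∀ z ∈ (Finset.univ.filter fun y : B => y ∈ C ∧ y ≠ ⊥ ∧ y ≤ x), ¬ z < d := by
    obtain ⟨d, hdm⟩ := exists_minimal_of_wellFoundedLT
      (· ∈ (Finset.univ.filter fun y : B => y ∈ C ∧ y ≠ ⊥ ∧ y ≤ x)) hne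
    exact ⟨d, hdm.prop, fun z hz => hdm.not_lt hz⟩
  simp only [mem_filter, mem_univ, true_and] at hd hmin
  refine ⟨d, mem_subAtoms.mpr ⟨hd.1, hd.2.1, fun z hz hz0 hzd => ?_⟩, hd.2.2⟩
  by_contra hne'
  exact hmin z ⟨hz, hz0, hzd.trans hd.2.2⟩ (lt_of_le_of_ne hzd hne')

lemma subAtoms_inf (hC : IsBoolSubalgebra C) {d₁ d₂ : B} (h1 : d₁ ∈ subAtoms C)
    (h2 : d₂ ∈ subAtoms C) (hne : d₁ ≠ d₂) : d₁ ⊓ d₂ = ⊥ := by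
  rw [mem_subAtoms] at h1 h2
  by_contra h
  have hm : d₁ ⊓ d₂ ∈ C := hC.2.2.2.1 _ h1.1 _ h2.1
  have e1 : d₁ ⊓ d₂ = d₁ := h1.2.2 _ hm h inf_le_left
  have e2 : d₁ ⊓ d₂ = d₂ := h2.2.2 _ hm h inf_le_right
  exact hne (e1.symm.trans e2)

lemma sup_subAtoms_eq_top (hC : IsBoolSubalgebra C) : (subAtoms C).sup id = ⊤ := by
  set s := (subAtoms C).sup id with hs
  have hsC : s ∈ C := sup_mem hC fun x hx => (mem_subAtoms.mp hx).1
  have hsc : sᶜ ∈ C := hC.2.2.2.2 _ hsC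
  by_cases h : sᶜ = ⊥
  · rwa [compl_eq_bot] at h
  · obtain ⟨d, hd, hds⟩ := exists_subAtom_le hC hsc h
    have : d ≤ s := Finset.le_sup (f := id) hd
    exact absurd (le_bot_iff.mp ((le_inf this hds).trans_eq inf_compl_eq_bot))
      (mem_subAtoms.mp hd).2.1

lemma mem_eq_sup_subAtoms (hC : IsBoolSubalgebra C) {x : B} (hx : x ∈ C) :
    ((subAtoms C).filter (· ≤ x)).sup id = x := by
  set s := ((subAtoms C).filter (· ≤ x)).sup id with hs
  have h1 : s ≤ x := Finset.sup_le fun a ha => (mem_filter.mp ha).2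
  refine le_antisymm h1 ?_
  apply le_of_inf_compl_eq_bot
  by_cases h : x ⊓ sᶜ = ⊥
  · exact h
  · exfalso
    have hsC : s ∈ C := sup_mem hC fun a ha => (mem_subAtoms.mp (mem_filter.mp ha).1).1
    have hmem : x ⊓ sᶜ ∈ C := hC.2.2.2.1 _ hx _ (hC.2.2.2.2 _ hsC)
    obtain ⟨d, hd, hdle⟩ := exists_subAtom_le hC hmem h
    have hdx : d ≤ x := hdle.trans inf_le_left
    have hds : d ≤ s := Finset.le_sup (f := id) (mem_filter.mpr ⟨hd, hdx⟩)
    have hdsc : d ≤ sᶜ := hdle.trans inf_le_right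
    exact (mem_subAtoms.mp hd).2.1
      (le_bot_iff.mp ((le_inf hds hdsc).trans_eq inf_compl_eq_bot))

end Sub

/-! ### Forward: subalgebra to partition -/

def blocks (C : Set B) : Finset (Finset B) :=
  (subAtoms C).image fun d => (atomFinset B).filter (· ≤ d)

lemma mem_blocks {C : Set B} {t : Finset B} :
    t ∈ blocks C ↔ ∃ d ∈ subAtoms C, (atomFinset B).filter (· ≤ d) = t := by
  simp [blocks]

def partitionOf {C : Set B} (hC : IsBoolSubalgebra C) : Finpartition (atomFinset B) where
  parts := blocks C
  supIndep := by
    rw [Finset.supIndep_iff_pairwiseDisjoint]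
    intro t₁ h₁ t₂ h₂ hne
    obtain ⟨d₁, hd₁, rfl⟩ := mem_blocks.mp h₁
    obtain ⟨d₂, hd₂, rfl⟩ := mem_blocks.mp h₂
    have hd : d₁ ≠ d₂ := fun h => hne (by rw [h])
    simp only [Function.onFun]
    rw [Finset.disjoint_left]
    intro a ha₁ ha₂
    have h₁' := mem_filter.mp ha₁
    have h₂' := mem_filter.mp ha₂
    have ha : IsAtom a := mem_atomFinset.mp h₁'.1
    have : a ≤ d₁ ⊓ d₂ := le_inf h₁'.2 h₂'.2
    rw [subAtoms_inf hC hd₁ hd₂ hd] at this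
    exact ha.1 (le_bot_iff.mp this)
  sup_parts := by
    apply Finset.Subset.antisymm
    · intro a ha
      obtain ⟨t, ht, hat⟩ := Finset.mem_sup.mp ha
      obtain ⟨d, _, rfl⟩ := mem_blocks.mp ht
      exact (mem_filter.mp hat).1
    · intro a ha
      have hatom : IsAtom a := mem_atomFinset.mp ha
      have : a ≤ (subAtoms C).sup id := by rw [sup_subAtoms_eq_top hC]; exact le_top
      obtain ⟨d, hd, had⟩ := atom_le_sup hatom this
      exact Finset.mem_sup.mpr ⟨_, mem_blocks.mpr ⟨d, hd, rfl⟩,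
        mem_filter.mpr ⟨ha, had⟩⟩
  bot_notMem := by
    intro h
    obtain ⟨d, hd, hfd⟩ := mem_blocks.mp h
    have hd' := mem_subAtoms.mp hd
    obtain ⟨a, ha, had⟩ := exists_atom_le hd'.2.1
    have : a ∈ (⊥ : Finset B) := hfd ▸ mem_filter.mpr ⟨mem_atomFinset.mpr ha, had⟩
    simp at this

lemma card_blocks {C : Set B} (hC : IsBoolSubalgebra C) :
    (blocks C).card = (subAtoms C).card := by
  apply Finset.card_image_of_injOn
  intro d₁ h₁ d₂ h₂ h
  have := congrArg (fun s : Finset B => s.sup id) h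
  simpa only [eq_sup_atoms] using this

/-! ### Backward: partition to subalgebra -/

def algebraOf (P : Finpartition (atomFinset B)) : Set B :=
  { x | ∀ t ∈ P.parts, (∀ a ∈ t, a ≤ x) ∨ ∀ a ∈ t, a ⊓ x = ⊥ }

variable {P : Finpartition (atomFinset B)}

lemma atom_of_mem_part {t : Finset B} (ht : t ∈ P.parts) {a : B} (ha : a ∈ t) : IsAtom a :=
  mem_atomFinset.mp (P.le ht ha)

lemma mem_part_of_atom_le_sup {t : Finset B} (ht : t ∈ P.parts) {a : B} (ha : IsAtom a)
    (h : a ≤ t.sup id) : a ∈ t := by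
  obtain ⟨b, hb, hab⟩ := atom_le_sup ha h
  rcases (atom_of_mem_part ht hb).le_iff.mp hab with h' | h'
  · exact absurd h' ha.1
  · rwa [h']

lemma isBoolSubalgebra_algebraOf (P : Finpartition (atomFinset B)) :
    IsBoolSubalgebra (algebraOf P) := by
  refine ⟨fun t ht => Or.inr fun a ha => inf_bot_eq a,
    fun t ht => Or.inl fun a ha => le_top, ?_, ?_, ?_⟩
  · intro x hx y hy t ht
    rcases hx t ht with h | h
    · exact Or.inl fun a ha => (h a ha).trans le_sup_left
    · rcases hy t ht with h' | h'
      · exact Or.inl fun a ha => (h' a ha).trans le_sup_right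
      · exact Or.inr fun a ha => by rw [inf_sup_left, h a ha, h' a ha, bot_sup_eq]
  · intro x hx y hy t ht
    rcases hx t ht with h | h
    · rcases hy t ht with h' | h'
      · exact Or.inl fun a ha => le_inf (h a ha) (h' a ha)
      · exact Or.inr fun a ha => le_bot_iff.mp
          ((inf_le_inf_left a inf_le_right).trans ((h' a ha).le))
    · exact Or.inr fun a ha => le_bot_iff.mp
        ((inf_le_inf_left a inf_le_left).trans ((h a ha).le))
  · intro x hx t ht
    rcases hx t ht with h | h
    · exact Or.inr fun a ha => le_bot_iff.mp
        ((inf_le_inf_right xᶜ (h a ha)).trans_eq inf_compl_eq_bot)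
    · exact Or.inl fun a ha => le_of_inf_compl_eq_bot (by rw [compl_compl]; exact h a ha)

lemma partSup_mem_algebraOf {t : Finset B} (ht : t ∈ P.parts) : t.sup id ∈ algebraOf P := by
  intro t' ht'
  by_cases h : t' = t
  · subst h
    exact Or.inl fun a ha => Finset.le_sup (f := id) ha
  · refine Or.inr fun a ha => ?_
    have hat : IsAtom a := atom_of_mem_part ht' ha
    rcases hat.le_iff.mp (inf_le_left : a ⊓ t.sup id ≤ a) with h' | h'
    · exact h'
    · exfalso
      have : a ≤ t.sup id := h' ▸ inf_le_right
      have hmem : a ∈ t := mem_part_of_atom_le_sup ht hat this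
      exact Finset.disjoint_left.mp
        (P.supIndep.pairwiseDisjoint ht' ht (fun e => h e)) ha hmem

lemma subAtoms_algebraOf (P : Finpartition (atomFinset B)) :
    subAtoms (algebraOf P) = P.parts.image fun t => t.sup id := by
  apply Finset.Subset.antisymm
  · intro d hd
    obtain ⟨hdC, hd0, hmin⟩ := mem_subAtoms.mp hd
    obtain ⟨a, hat, had⟩ := exists_atom_le hd0
    have haA : a ∈ atomFinset B := mem_atomFinset.mpr hat
    rw [← P.sup_parts] at haA
    obtain ⟨t, ht, hatm⟩ := Finset.mem_sup.mp haA
    have hsup : t.sup id ≤ d := by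
      rcases hdC t ht with h | h
      · exact Finset.sup_le h
      · exact absurd (le_bot_iff.mp ((le_inf le_rfl had).trans_eq (h a hatm))) hat.1
    have hne : t.sup id ≠ ⊥ := by
      intro h
      exact hat.1 (le_bot_iff.mp (h ▸ Finset.le_sup (f := id) hatm))
    have := hmin _ (partSup_mem_algebraOf ht) hne hsup
    exact Finset.mem_image.mpr ⟨t, ht, this⟩
  · intro d hd
    obtain ⟨t, ht, rfl⟩ := Finset.mem_image.mp hd
    obtain ⟨a, hamem⟩ := P.nonempty_of_mem_parts ht
    have hat : IsAtom a := atom_of_mem_part ht hamem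
    refine mem_subAtoms.mpr ⟨partSup_mem_algebraOf ht, ?_, ?_⟩
    · intro h
      exact hat.1 (le_bot_iff.mp (h ▸ Finset.le_sup (f := id) hamem))
    · intro x hx hx0 hxle
      obtain ⟨b, hbt, hbx⟩ := exists_atom_le hx0
      have hbmem : b ∈ t := mem_part_of_atom_le_sup ht hbt (hbx.trans hxle)
      rcases hx t ht with h | h
      · exact le_antisymm hxle (Finset.sup_le h)
      · exact absurd (le_bot_iff.mp ((le_inf le_rfl hbx).trans_eq (h b hbmem))) hbt.1

lemma filter_sup_part {t : Finset B} (ht : t ∈ P.parts) :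
    (atomFinset B).filter (· ≤ t.sup id) = t := by
  ext a
  simp only [mem_filter]
  constructor
  · rintro ⟨ha, hle⟩
    exact mem_part_of_atom_le_sup ht (mem_atomFinset.mp ha) hle
  · intro ha
    exact ⟨P.le ht ha, Finset.le_sup (f := id) ha⟩

lemma card_subAtoms_algebraOf (P : Finpartition (atomFinset B)) :
    (subAtoms (algebraOf P)).card = P.parts.card := by
  rw [subAtoms_algebraOf]
  apply Finset.card_image_of_injOn
  intro t₁ h₁ t₂ h₂ h
  have h' : t₁.sup id = t₂.sup id := h
  rw [← filter_sup_part (Finset.mem_coe.mp h₁), ← filter_sup_part (Finset.mem_coe.mp h₂), h']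

/-! ### Round trips -/

lemma algebraOf_partitionOf {C : Set B} (hC : IsBoolSubalgebra C) :
    algebraOf (partitionOf hC) = C := by
  ext x
  constructor
  · intro hx
    have key : ∀ d ∈ subAtoms C, d ≤ x ∨ d ⊓ x = ⊥ := by
      intro d hd
      rcases hx _ (mem_blocks.mpr ⟨d, hd, rfl⟩) with h | h
      · left
        conv_lhs => rw [← eq_sup_atoms d]
        exact Finset.sup_le fun a ha => h a ha
      · right
        by_contra hne
        obtain ⟨a, hat, hale⟩ := exists_atom_le hne
        have : a ⊓ x = ⊥ :=
          h a (mem_filter.mpr ⟨mem_atomFinset.mpr hat, hale.trans inf_le_left⟩)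
        exact hat.1 (le_bot_iff.mp ((le_inf le_rfl (hale.trans inf_le_right)).trans_eq this))
    have hx_eq : ((subAtoms C).filter (· ≤ x)).sup id = x := by
      refine le_antisymm (Finset.sup_le fun d hd => (mem_filter.mp hd).2) ?_
      apply le_of_inf_compl_eq_bot
      by_contra h
      obtain ⟨a, hat, hale⟩ := exists_atom_le h
      have : a ≤ (subAtoms C).sup id := by rw [sup_subAtoms_eq_top hC]; exact le_top
      obtain ⟨d, hd, had⟩ := atom_le_sup hat this
      have hax : a ≤ x := hale.trans inf_le_left
      rcases key d hd with h' | h'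
      · have : a ≤ ((subAtoms C).filter (· ≤ x)).sup id :=
          (had.trans (Finset.le_sup (f := id) (mem_filter.mpr ⟨hd, h'⟩)))
        exact hat.1 (le_bot_iff.mp ((le_inf this (hale.trans inf_le_right)).trans_eq
          inf_compl_eq_bot))
      · exact hat.1 (le_bot_iff.mp ((le_inf had hax).trans_eq h'))
    rw [← hx_eq]
    exact sup_mem hC fun d hd => (mem_subAtoms.mp (mem_filter.mp hd).1).1
  · intro hx t ht
    obtain ⟨d, hd, rfl⟩ := mem_blocks.mp ht
    have hd' := mem_subAtoms.mp hd
    have hdx : d ⊓ x ∈ C := hC.2.2.2.1 _ hd'.1 _ hx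
    by_cases h : d ⊓ x = ⊥
    · exact Or.inr fun a ha => le_bot_iff.mp
        ((inf_le_inf_right x (mem_filter.mp ha).2).trans_eq h)
    · have : d ⊓ x = d := hd'.2.2 _ hdx h inf_le_left
      exact Or.inl fun a ha => (mem_filter.mp ha).2.trans (inf_eq_left.mp this)

lemma partitionOf_algebraOf (P : Finpartition (atomFinset B)) :
    partitionOf (isBoolSubalgebra_algebraOf P) = P := by
  apply Finpartition.ext
  show blocks (algebraOf P) = P.parts
  unfold blocks
  rw [subAtoms_algebraOf, Finset.image_image]
  refine (Finset.image_congr (g := id) ?_).trans Finset.image_id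
  intro t ht
  exact filter_sup_part (Finset.mem_coe.mp ht)


variable {γ δ : Type*} [Fintype γ] [DecidableEq γ] (f : γ ↪ δ) {s : Finset δ}

lemma mem_s_iff (hs : Finset.univ.map f = s) {x : δ} : x ∈ s ↔ ∃ i : γ, f i = x := by
  rw [← hs]; simp

def fwd (hs : Finset.univ.map f = s) (P : Finpartition (Finset.univ : Finset γ)) : Finpartition s where
  parts := P.parts.image fun t => t.map f
  supIndep := by
    rw [Finset.supIndep_iff_pairwiseDisjoint]
    intro t₁ h₁ t₂ h₂ hne
    obtain ⟨u₁, hu₁, rfl⟩ := Finset.mem_image.mp (Finset.mem_coe.mp h₁)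
    obtain ⟨u₂, hu₂, rfl⟩ := Finset.mem_image.mp (Finset.mem_coe.mp h₂)
    have hu : u₁ ≠ u₂ := fun h => hne (by rw [h])
    simp only [Function.onFun, Function.id_def]
    rw [Finset.disjoint_map]
    exact P.supIndep.pairwiseDisjoint hu₁ hu₂ hu
  sup_parts := by
    ext x
    rw [Finset.mem_sup, mem_s_iff f hs]
    constructor
    · rintro ⟨t, ht, hxt⟩
      obtain ⟨u, hu, rfl⟩ := Finset.mem_image.mp ht
      obtain ⟨i, _, rfl⟩ := Finset.mem_map.mp hxt
      exact ⟨i, rfl⟩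
    · rintro ⟨i, rfl⟩
      have : i ∈ P.parts.sup id := by rw [P.sup_parts]; exact mem_univ i
      obtain ⟨u, hu, hiu⟩ := Finset.mem_sup.mp this
      exact ⟨u.map f, Finset.mem_image.mpr ⟨u, hu, rfl⟩, Finset.mem_map_of_mem f hiu⟩
  bot_notMem := by
    intro h
    obtain ⟨u, hu, hun⟩ := Finset.mem_image.mp h
    rw [show (⊥ : Finset δ) = ∅ from rfl, Finset.map_eq_empty] at hun
    apply P.bot_notMem
    rw [show (⊥ : Finset γ) = ∅ from rfl, ← hun]
    exact hu

def bwd (hs : Finset.univ.map f = s) (Q : Finpartition s) : Finpartition (Finset.univ : Finset γ) where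
  parts := Q.parts.image fun t => t.preimage f f.injective.injOn
  supIndep := by
    rw [Finset.supIndep_iff_pairwiseDisjoint]
    intro t₁ h₁ t₂ h₂ hne
    obtain ⟨u₁, hu₁, rfl⟩ := Finset.mem_image.mp (Finset.mem_coe.mp h₁)
    obtain ⟨u₂, hu₂, rfl⟩ := Finset.mem_image.mp (Finset.mem_coe.mp h₂)
    have hu : u₁ ≠ u₂ := fun h => hne (by rw [h])
    simp only [Function.onFun, Function.id_def]
    rw [Finset.disjoint_left]
    intro i hi₁ hi₂
    rw [Finset.mem_preimage] at hi₁ hi₂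
    exact Finset.disjoint_left.mp (Q.supIndep.pairwiseDisjoint hu₁ hu₂ hu) hi₁ hi₂
  sup_parts := by
    rw [Finset.eq_univ_iff_forall]
    intro i
    have hfi : f i ∈ s := (mem_s_iff f hs).mpr ⟨i, rfl⟩
    rw [← Q.sup_parts] at hfi
    obtain ⟨u, hu, hiu⟩ := Finset.mem_sup.mp hfi
    exact Finset.mem_sup.mpr ⟨_, Finset.mem_image.mpr ⟨u, hu, rfl⟩,
      Finset.mem_preimage.mpr hiu⟩
  bot_notMem := by
    intro h
    obtain ⟨u, hu, hun⟩ := Finset.mem_image.mp h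
    obtain ⟨x, hx⟩ := Q.nonempty_of_mem_parts hu
    obtain ⟨i, rfl⟩ := (mem_s_iff f hs).mp (Q.le hu hx)
    have : i ∈ u.preimage f f.injective.injOn := Finset.mem_preimage.mpr hx
    rw [hun] at this
    simp at this

lemma map_preimage_eq (hs : Finset.univ.map f = s) {u : Finset δ} (hu : u ⊆ s) :
    (u.preimage f f.injective.injOn).map f = u := by
  ext x
  simp only [Finset.mem_map, Finset.mem_preimage]
  constructor
  · rintro ⟨i, hi, rfl⟩; exact hi
  · intro hx
    obtain ⟨i, rfl⟩ := (mem_s_iff f hs).mp (hu hx)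
    exact ⟨i, hx, rfl⟩

lemma preimage_map_eq (u : Finset γ) : (u.map f).preimage f f.injective.injOn = u := by
  ext i
  simp only [Finset.mem_preimage, Finset.mem_map]
  constructor
  · rintro ⟨j, hj, hji⟩
    rwa [← f.injective hji]
  · intro hi; exact ⟨i, hi, rfl⟩

lemma fwd_bwd (hs : Finset.univ.map f = s) (Q : Finpartition s) : fwd f hs (bwd f hs Q) = Q := by
  apply Finpartition.ext
  show ((Q.parts.image _).image _) = Q.parts
  rw [Finset.image_image]
  refine (Finset.image_congr (g := id) ?_).trans Finset.image_id
  intro u hu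
  exact map_preimage_eq f hs (Q.le (Finset.mem_coe.mp hu))

lemma bwd_fwd (hs : Finset.univ.map f = s) (P : Finpartition (Finset.univ : Finset γ)) : bwd f hs (fwd f hs P) = P := by
  apply Finpartition.ext
  show ((P.parts.image _).image _) = P.parts
  rw [Finset.image_image]
  refine (Finset.image_congr (g := id) ?_).trans Finset.image_id
  intro u hu
  exact preimage_map_eq f u

lemma card_fwd (hs : Finset.univ.map f = s) (P : Finpartition (Finset.univ : Finset γ)) :
    (fwd f hs P).parts.card = P.parts.card := by
  show (P.parts.image _).card = _
  apply Finset.card_image_of_injOn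
  intro u₁ _ u₂ _ h
  exact Finset.map_injective f h

lemma card_bwd (hs : Finset.univ.map f = s) (Q : Finpartition s) : (bwd f hs Q).parts.card = Q.parts.card := by
  show (Q.parts.image _).card = _
  apply Finset.card_image_of_injOn
  intro u₁ h₁ u₂ h₂ h
  have h0 : u₁.preimage f f.injective.injOn = u₂.preimage f f.injective.injOn := h
  have h' : (u₁.preimage f f.injective.injOn).map f = (u₂.preimage f f.injective.injOn).map f := by
    rw [h0]
  rwa [map_preimage_eq f hs (Q.le (Finset.mem_coe.mp h₁)),
    map_preimage_eq f hs (Q.le (Finset.mem_coe.mp h₂))] at h'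


end BSA

/-- Let `B` have `n` atoms and `1 ≤ k ≤ n`.  The number of Boolean
subalgebras of `B` with exactly `k` atoms is the Stirling number `S(n, k)`. -/
theorem card_boolSubalgebras_eq_stirling {B : Type*} [Fintype B] [BooleanAlgebra B]
    [Nontrivial B] (n k : ℕ)
    (hn : n = (Finset.univ.filter fun c : B => IsAtom c).card) (hk : 1 ≤ k) (hkn : k ≤ n) :
    Nat.card {C : Set B // IsBoolSubalgebra C ∧ (subAtoms C).card = k} = stirling n k := by
  classical
  have hcard : Fintype.card {a : B // a ∈ BSA.atomFinset B} = n := by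
    rw [Fintype.card_coe]
    exact hn.symm
  let e : Fin n ≃ {a : B // a ∈ BSA.atomFinset B} := (Fintype.equivFinOfCardEq hcard).symm
  let f : Fin n ↪ B := ⟨fun i => (e i : B), fun i j h => e.injective (Subtype.ext h)⟩
  have hs : Finset.univ.map f = BSA.atomFinset B := by
    ext a
    simp only [Finset.mem_map, Finset.mem_univ, true_and]
    constructor
    · rintro ⟨i, rfl⟩
      exact (e i).2
    · intro ha
      exact ⟨e.symm ⟨a, ha⟩, by show ((e (e.symm ⟨a, ha⟩) : B)) = a; simp⟩
  have E1 : {C : Set B // IsBoolSubalgebra C ∧ (subAtoms C).card = k} ≃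
      {P : Finpartition (BSA.atomFinset B) // P.parts.card = k} :=
    { toFun := fun C => ⟨BSA.partitionOf C.2.1, by
        rw [show (BSA.partitionOf C.2.1).parts = BSA.blocks C.1 from rfl,
          BSA.card_blocks C.2.1]
        exact C.2.2⟩
      invFun := fun P => ⟨BSA.algebraOf P.1, BSA.isBoolSubalgebra_algebraOf P.1, by
        rw [BSA.card_subAtoms_algebraOf]; exact P.2⟩
      left_inv := fun C => Subtype.ext (BSA.algebraOf_partitionOf C.2.1)
      right_inv := fun P => Subtype.ext (BSA.partitionOf_algebraOf P.1) }
  have E2 : {P : Finpartition (BSA.atomFinset B) // P.parts.card = k} ≃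
      {P : Finpartition (Finset.univ : Finset (Fin n)) // P.parts.card = k} :=
    { toFun := fun P => ⟨BSA.bwd f hs P.1, by rw [BSA.card_bwd f hs]; exact P.2⟩
      invFun := fun P => ⟨BSA.fwd f hs P.1, by rw [BSA.card_fwd f hs]; exact P.2⟩
      left_inv := fun P => Subtype.ext (BSA.fwd_bwd f hs P.1)
      right_inv := fun P => Subtype.ext (BSA.bwd_fwd f hs P.1) }
  rw [Nat.card_congr E1, Nat.card_congr E2]
  rfl
end
end

section
/- A subset A of B is an implication sublattice of B if and only if there exists a ∈ B such that a ∈ A, every element of A lies in [a,1] = {x ∈ B : a ≤ x}, 1 ∈ A, and A is closed under ⊔, ⊓, and the relative complement x ↦ xᶜ ⊔ a of the Boolean algebra [a,1]; that is, A is a Boolean subalgebra of the Boolean algebra [a,1] for some a ∈ B. -/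
open scoped Classical

noncomputable section

/-- characterization of implication sublattices.  A subset `A` of `B`
is an implication sublattice iff it is a Boolean subalgebra of the interval Boolean
algebra `[a,⊤] = {x : a ≤ x}` for some `a ∈ B`: there is `a ∈ A` with `A ⊆ [a,⊤]`,
`⊤ ∈ A`, and `A` closed under `⊔`, `⊓` and the relative complement `x ↦ xᶜ ⊔ a`. -/
theorem isImplSublattice_iff_boolSubalgebra_Ici {B : Type*} [Fintype B] [BooleanAlgebra B]
    [Nontrivial B] (A : Set B) :
    IsImplSublattice A ↔
      ∃ a : B, a ∈ A ∧ A ⊆ Set.Ici a ∧ (⊤ : B) ∈ A ∧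
        (∀ x ∈ A, ∀ y ∈ A, x ⊔ y ∈ A) ∧ (∀ x ∈ A, ∀ y ∈ A, x ⊓ y ∈ A) ∧
        (∀ x ∈ A, xᶜ ⊔ a ∈ A) := by
  constructor
  · rintro ⟨⟨x₀, hx₀⟩, himp, hinf⟩
    have hA : A.Finite := A.toFinite
    have htne : hA.toFinset.Nonempty := ⟨x₀, hA.mem_toFinset.2 hx₀⟩
    set a := hA.toFinset.inf' htne id with ha
    have haA : a ∈ A := by
      refine Finset.inf'_mem A (fun x hx y hy => hinf x hx y hy) _ htne id ?_
      intro i hi; exact hA.mem_toFinset.1 hi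
    have hle : ∀ x ∈ A, a ≤ x := fun x hx =>
      Finset.inf'_le id (hA.mem_toFinset.2 hx)
    have htop : (⊤ : B) ∈ A := by
      have := himp x₀ hx₀ x₀ hx₀
      simpa using this
    refine ⟨a, haA, fun x hx => hle x hx, htop, ?_, hinf, ?_⟩
    · intro x hx y hy
      have h1 := himp x hx y hy
      have h2 := himp _ h1 y hy
      have : (xᶜ ⊔ y)ᶜ ⊔ y = x ⊔ y := by
        rw [compl_sup, compl_compl, sup_inf_right]
        simp
      rwa [this] at h2
    · intro x hx
      exact himp x hx a haA
  · rintro ⟨a, haA, hsub, htop, hsup, hinf, hc⟩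
    refine ⟨⟨a, haA⟩, ?_, hinf⟩
    intro x hx y hy
    have h1 := hsup _ (hc x hx) y hy
    have : xᶜ ⊔ a ⊔ y = xᶜ ⊔ y := by
      have hay : a ≤ y := hsub hy
      rw [sup_assoc, sup_eq_right.2 hay]
    rwa [this] at h1
end
end
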